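/- arXiv:1301.6070 — 4 statements merged into one kernel-verified Lean document; each statement's English description precedes it below -/
import Mathlib

section
/- Let γ : X → ℂ be a generalized path. For any x, t ∈ [0,1], μ ∈ (0,1], and any ε > 0, there are only finitely many connected components C of the sets γ⁻¹(S^{x,t,μ}_j) (as j ranges over ℤ) with ‖γ(C)‖_t ≥ ε. -/
open Set MeasureTheory

noncomputable section

/-- The closed horizontal strip `S_j = {a + ib : a ∈ ℝ, b ∈ [j, j+1]} ⊆ ℂ`. -/
def hStrip (j : ℤ) : Set ℂ := {z : ℂ | (j : ℝ) ≤ z.im ∧ z.im ≤ (j : ℝ) + 1}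

/-- The strip `S^{x,t,μ}_j = μ·e^{tπi}·(S_j + ix)`. -/
def Strip (x t μ : ℝ) (j : ℤ) : Set ℂ :=
  (fun z : ℂ => (μ : ℂ) * Complex.exp ((t : ℂ) * (Real.pi : ℂ) * Complex.I) *
    (z + (x : ℂ) * Complex.I)) '' hStrip j

/-- The orthogonal projection of `ℂ` onto the line `{r·e^{(t+1/2)πi} : r ∈ ℝ}`,
composed with the natural isometric identification of this line with `ℝ`
(so that Euclidean diameters of subsets are preserved). -/
def projPerp (t : ℝ) (z : ℂ) : ℝ :=
  (z * Complex.exp (-(((t : ℂ) + 1 / 2) * (Real.pi : ℂ) * Complex.I))).re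

/-- `‖A‖_t`, the (Euclidean) diameter of the orthogonal projection `proj⊥_t(A)`. -/
def normT (t : ℝ) (A : Set ℂ) : ℝ := Metric.diam (projPerp t '' A)

/-- The collection of all connected components of the sets `γ⁻¹(S^{x,t,μ}_j)`, `j ∈ ℤ`. -/
def stripComponents {X : Type*} [TopologicalSpace X] (γ : X → ℂ) (x t μ : ℝ) : Set (Set X) :=
  {C | ∃ j : ℤ, ∃ p ∈ γ ⁻¹' Strip x t μ j, C = connectedComponentIn (γ ⁻¹' Strip x t μ j) p}

/-- The components whose image under `proj⊥_t ∘ γ` is non-degenerate. -/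
def ndComponents {X : Type*} [TopologicalSpace X] (γ : X → ℂ) (x t μ : ℝ) : Set (Set X) :=
  {C | C ∈ stripComponents γ x t μ ∧ (projPerp t '' (γ '' C)).Nontrivial}

/-- `L^{x,t,μ}(γ) = ∑ₙ ‖γ(C_n)‖_t / 2ⁿ`, where `⟨C_n⟩ₙ` enumerates the components of
the sets `γ⁻¹(S^{x,t,μ}_j)` (`j ∈ ℤ`) with non-degenerate projection, in non-increasing
order of `‖γ(C_n)‖_t`.  Since the weights `2⁻ⁿ` are strictly decreasing, this sum is equal
to the supremum, over all finite injective enumerations `e` of such components, of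
`∑ₙ ‖γ(e n)‖_t / 2ⁿ`; we take this supremum as the formal definition. -/
def Lfn {X : Type*} [TopologicalSpace X] (γ : X → ℂ) (x t μ : ℝ) : ℝ :=
  sSup {r : ℝ | ∃ (N : ℕ) (e : Fin N → Set X), Function.Injective e ∧
    (∀ n, e n ∈ ndComponents γ x t μ) ∧
    r = ∑ n : Fin N, normT t (γ '' e n) / (2 : ℝ) ^ (n : ℕ)}

/-- `len(γ) = ∫₀¹∫₀¹∫₀¹ L^{x,t,μ}(γ) dx dt dμ`. -/
def len {X : Type*} [TopologicalSpace X] (γ : X → ℂ) : ℝ :=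
  ∫ μ in (0:ℝ)..1, ∫ t in (0:ℝ)..1, ∫ x in (0:ℝ)..1, Lfn γ x t μ


/-! ### Auxiliary lemmas -/

lemma projPerp_continuous (t : ℝ) : Continuous (projPerp t) :=
  Complex.continuous_re.comp (continuous_id.mul continuous_const)

lemma projPerp_formula (t x μ : ℝ) (w : ℂ) :
    projPerp t ((μ : ℂ) * Complex.exp ((t : ℂ) * (Real.pi : ℂ) * Complex.I) *
      (w + (x : ℂ) * Complex.I)) = μ * (w.im + x) := by
  have hexp : Complex.exp ((t : ℂ) * (Real.pi : ℂ) * Complex.I) *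
      Complex.exp (-(((t : ℂ) + 1 / 2) * (Real.pi : ℂ) * Complex.I)) = -Complex.I := by
    rw [← Complex.exp_add]
    have h : (t : ℂ) * (Real.pi : ℂ) * Complex.I +
        -(((t : ℂ) + 1 / 2) * (Real.pi : ℂ) * Complex.I)
        = ((-(Real.pi / 2) : ℝ) : ℂ) * Complex.I := by push_cast; ring
    rw [h, Complex.exp_mul_I]
    simp [← Complex.ofReal_cos, ← Complex.ofReal_sin, Real.cos_pi_div_two, Real.sin_pi_div_two]
  unfold projPerp
  have h2 : (μ : ℂ) * Complex.exp ((t : ℂ) * (Real.pi : ℂ) * Complex.I) *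
        (w + (x : ℂ) * Complex.I) *
        Complex.exp (-(((t : ℂ) + 1 / 2) * (Real.pi : ℂ) * Complex.I))
      = (μ : ℂ) * (w + (x : ℂ) * Complex.I) *
        (Complex.exp ((t : ℂ) * (Real.pi : ℂ) * Complex.I) *
          Complex.exp (-(((t : ℂ) + 1 / 2) * (Real.pi : ℂ) * Complex.I))) := by ring
  rw [h2, hexp]
  simp [Complex.mul_re, Complex.mul_im]

lemma strip_eq (x t μ : ℝ) (hμ : 0 < μ) (j : ℤ) :
    Strip x t μ j = projPerp t ⁻¹' Icc (μ * ((j : ℝ) + x)) (μ * ((j : ℝ) + x) + μ) := by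
  ext z
  constructor
  · rintro ⟨w, ⟨h1, h2⟩, rfl⟩
    simp only [mem_preimage, mem_Icc]
    rw [projPerp_formula]
    constructor
    · nlinarith
    · nlinarith
  · intro hz
    rw [mem_preimage, mem_Icc] at hz
    set E := Complex.exp ((t : ℂ) * (Real.pi : ℂ) * Complex.I) with hE_def
    have hEne : E ≠ 0 := Complex.exp_ne_zero _
    have hμne : (μ : ℂ) ≠ 0 := by exact_mod_cast hμ.ne'
    set w : ℂ := z / ((μ : ℂ) * E) - (x : ℂ) * Complex.I with hw_def
    have hzw : (μ : ℂ) * E * (w + (x : ℂ) * Complex.I) = z := by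
      rw [hw_def]; field_simp; ring
    have hproj : projPerp t z = μ * (w.im + x) := by
      rw [← hzw]; exact projPerp_formula t x μ w
    rw [hproj] at hz
    refine ⟨w, ⟨?_, ?_⟩, hzw⟩
    · have h1 := (mul_le_mul_iff_right₀ hμ).mp hz.1
      linarith
    · have h2' : μ * (w.im + x) ≤ μ * (((j : ℝ) + x) + 1) := by
        have := hz.2; linarith [this]
      have h2 := (mul_le_mul_iff_right₀ hμ).mp h2'
      linarith

/-- Key finiteness lemma: for a continuous real-valued function on a compact locally
connected space, and a value `v` interior to `[c,d]`, only finitely many connected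
components of `f⁻¹[c,d]` have `v` in the image. -/
lemma finite_components_at {X : Type*} [TopologicalSpace X] [CompactSpace X]
    [LocallyConnectedSpace X] {f : X → ℝ} (hf : Continuous f) (c d v : ℝ) :
    {C : Set X | (∃ p : X, C = connectedComponentIn (f ⁻¹' Icc c d) p) ∧ v ∈ f '' C ∧
      v ∈ Ioo c d}.Finite := by
  by_cases hv : v ∈ Ioo c d
  · set S : Set X := f ⁻¹' Icc c d with hS_def
    have hK : IsCompact (f ⁻¹' {v}) := (isClosed_singleton.preimage hf).isCompact
    have hnb : ∀ p ∈ f ⁻¹' {v}, ∃ V : Set X,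
        V ⊆ f ⁻¹' Ioo c d ∧ IsOpen V ∧ p ∈ V ∧ IsConnected V := by
      intro p hp
      have hmem : f ⁻¹' Ioo c d ∈ nhds p := by
        refine (isOpen_Ioo.preimage hf).mem_nhds ?_
        have : f p = v := hp
        simpa [mem_preimage, this] using hv
      exact locallyConnectedSpace_iff_subsets_isOpen_isConnected.mp ‹_› p _ hmem
    choose V hVsub hVopen hVmem hVconn using hnb
    obtain ⟨sF, hs_cover⟩ := hK.elim_nhds_subcover' V
      (fun p hp => (hVopen p hp).mem_nhds (hVmem p hp))
    have hfinImg : ((fun p : (f ⁻¹' {v} : Set X) => connectedComponentIn S (p : X)) ''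
        (sF : Set (f ⁻¹' {v} : Set X))).Finite :=
      sF.finite_toSet.image _
    refine hfinImg.subset ?_
    rintro C ⟨⟨p0, rfl⟩, ⟨q, hqC, hfq⟩, -⟩
    have hqv : q ∈ f ⁻¹' {v} := by simp [mem_preimage, hfq]
    obtain ⟨pt, hpt_s, hq_V⟩ := mem_iUnion₂.mp (hs_cover hqv)
    have hCq : connectedComponentIn S q = connectedComponentIn S p0 :=
      (connectedComponentIn_eq hqC).symm
    have hVS : V (pt : X) pt.2 ⊆ S := (hVsub _ _).trans (preimage_mono Ioo_subset_Icc_self)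
    have hVsubC : V (pt : X) pt.2 ⊆ connectedComponentIn S q :=
      (hVconn _ _).isPreconnected.subset_connectedComponentIn hq_V hVS
    have hptC : (pt : X) ∈ connectedComponentIn S p0 := by
      rw [← hCq]; exact hVsubC (hVmem _ _)
    exact ⟨pt, hpt_s, (connectedComponentIn_eq hptC).symm⟩
  · convert finite_empty
    ext C
    simp only [mem_setOf_eq, mem_empty_iff_false, iff_false, not_and]
    exact fun _ _ => hv

/-- **Lemma 2.1.** Let `γ : X → ℂ` be a generalized path (a continuous map from a locally
connected continuum, i.e. a compact connected locally connected metric space, to `ℂ`).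
For any `x, t ∈ [0,1]`, `μ ∈ (0,1]` and any `ε > 0`, there are only finitely many
connected components `C` of the sets `γ⁻¹(S^{x,t,μ}_j)` (`j ∈ ℤ`) with `‖γ(C)‖_t ≥ ε`. -/
theorem finitely_many_components_with_large_projection
    {X : Type*} [MetricSpace X] [CompactSpace X] [ConnectedSpace X] [LocallyConnectedSpace X]
    (γ : X → ℂ) (hγ : Continuous γ)
    (x t μ : ℝ) (hx : x ∈ Icc (0:ℝ) 1) (ht : t ∈ Icc (0:ℝ) 1) (hμ : μ ∈ Ioc (0:ℝ) 1)
    (ε : ℝ) (hε : 0 < ε) :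
    {C : Set X | C ∈ stripComponents γ x t μ ∧ ε ≤ normT t (γ '' C)}.Finite := by
  obtain ⟨hμ0, hμ1⟩ := hμ
  set f : X → ℝ := fun p => projPerp t (γ p) with hf_def
  have hf : Continuous f := (projPerp_continuous t).comp hγ
  have hpre : ∀ j : ℤ, γ ⁻¹' Strip x t μ j
      = f ⁻¹' Icc (μ * ((j : ℝ) + x)) (μ * ((j : ℝ) + x) + μ) := by
    intro j
    rw [strip_eq x t μ hμ0 j]
    rfl
  -- a bound on |f|
  obtain ⟨R, hR⟩ : ∃ R : ℝ, ∀ p : X, |f p| ≤ R := by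
    obtain ⟨r, hr⟩ := (Metric.isBounded_iff_subset_closedBall (0 : ℝ)).mp
      (isCompact_range hf).isBounded
    refine ⟨r, fun p => ?_⟩
    have := hr (mem_range_self p)
    simpa [Real.dist_eq] using this
  -- finite index sets
  set J : Set ℤ := Icc ⌊-R / μ - 2⌋ ⌈R / μ⌉ with hJ_def
  set K : Set ℤ := Icc (0 : ℤ) ⌈8 / ε⌉ with hK_def
  have hfin : (⋃ j ∈ J, ⋃ k ∈ K,
      {C : Set X | (∃ p : X, C = connectedComponentIn
          (f ⁻¹' Icc (μ * ((j : ℝ) + x)) (μ * ((j : ℝ) + x) + μ)) p) ∧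
        (μ * ((j : ℝ) + x) + (k : ℝ) * (ε / 8)) ∈ f '' C ∧
        (μ * ((j : ℝ) + x) + (k : ℝ) * (ε / 8)) ∈
          Ioo (μ * ((j : ℝ) + x)) (μ * ((j : ℝ) + x) + μ)}).Finite := by
    refine (Set.finite_Icc _ _).biUnion fun j _ => (Set.finite_Icc _ _).biUnion fun k _ => ?_
    exact finite_components_at hf _ _ _
  refine hfin.subset ?_
  rintro C ⟨⟨j, p, hp, rfl⟩, hdiam⟩
  rw [hpre j] at hp hdiam ⊢
  set c : ℝ := μ * ((j : ℝ) + x) with hc_def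
  set S : Set X := f ⁻¹' Icc c (c + μ) with hS_def
  set C : Set X := connectedComponentIn S p with hC_def
  -- rewrite the diameter hypothesis in terms of `f`
  have hdiam' : ε ≤ Metric.diam (f '' C) := by
    have h : ε ≤ Metric.diam (projPerp t '' (γ '' C)) := hdiam
    rw [Set.image_image] at h
    exact h
  -- bounds on j
  rw [mem_preimage, mem_Icc] at hp
  have habs := abs_le.mp (hR p)
  have hjJ : j ∈ J := by
    rw [hJ_def, mem_Icc]
    constructor
    · have hA : -R ≤ ((j : ℝ) + x + 1) * μ := by
        have h1 := hp.2
        have h2 := habs.1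
        nlinarith
      have hB : -R / μ ≤ (j : ℝ) + x + 1 := (div_le_iff₀ hμ0).mpr hA
      have h1 : -R / μ - 2 ≤ (j : ℝ) := by linarith [hx.2]
      calc ⌊-R / μ - 2⌋ ≤ ⌊(j : ℝ)⌋ := Int.floor_mono h1
        _ = j := Int.floor_intCast j
    · have hA : ((j : ℝ) + x) * μ ≤ R := by
        have h1 := hp.1
        have h2 := habs.2
        nlinarith
      have hB : (j : ℝ) + x ≤ R / μ := (le_div_iff₀ hμ0).mpr hA
      have h1 : (j : ℝ) ≤ R / μ := by linarith [hx.1]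
      calc j = ⌈(j : ℝ)⌉ := (Int.ceil_intCast j).symm
        _ ≤ ⌈R / μ⌉ := Int.ceil_mono h1
  -- the image of C lies in [c, c+μ]
  have hCf : f '' C ⊆ Icc c (c + μ) := by
    rintro - ⟨q, hq, rfl⟩
    exact connectedComponentIn_subset S p hq
  -- two far-apart points in the image
  obtain ⟨u, hu, w, hw, hu_le_w, hεuw⟩ :
      ∃ u ∈ f '' C, ∃ w ∈ f '' C, u ≤ w ∧ ε / 2 < w - u := by
    by_contra hcon
    push_neg at hcon
    have hle : Metric.diam (f '' C) ≤ ε / 2 := by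
      refine Metric.diam_le_of_forall_dist_le (by linarith) ?_
      intro a ha b hb
      rw [Real.dist_eq, abs_le]
      rcases le_total a b with hab | hab
      · have h := hcon a ha b hb hab
        constructor <;> linarith
      · have h := hcon b hb a ha hab
        constructor <;> linarith
    linarith
  have hIcc_sub : Icc u w ⊆ f '' C := by
    have hpc : IsPreconnected (f '' C) :=
      (isPreconnected_connectedComponentIn).image f hf.continuousOn
    exact hpc.Icc_subset hu hw
  have hcu : c ≤ u := (hCf hu).1
  have hwc : w ≤ c + μ := (hCf hw).2
  -- choose the grid point
  have hε8 : (0 : ℝ) < ε / 8 := by linarith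
  set k : ℤ := ⌈(u + ε / 8 - c) / (ε / 8)⌉ with hk_def
  have hk_lb : u + ε / 8 - c ≤ (k : ℝ) * (ε / 8) :=
    (div_le_iff₀ hε8).mp (Int.le_ceil _)
  have hk_ub : (k : ℝ) * (ε / 8) < u + ε / 4 - c := by
    have h1 : (k : ℝ) < (u + ε / 8 - c) / (ε / 8) + 1 := Int.ceil_lt_add_one _
    have h2 : (k : ℝ) * (ε / 8) < ((u + ε / 8 - c) / (ε / 8) + 1) * (ε / 8) :=
      mul_lt_mul_of_pos_right h1 hε8
    have h3 : (u + ε / 8 - c) / (ε / 8) * (ε / 8) = u + ε / 8 - c :=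
      div_mul_cancel₀ _ hε8.ne'
    rw [add_mul, h3] at h2
    linarith
  set v : ℝ := c + (k : ℝ) * (ε / 8) with hv_def
  clear_value v
  have hv_mem : v ∈ Icc u w := by
    constructor
    · have : u + ε / 8 ≤ v := by rw [hv_def]; linarith
      linarith
    · have : v < u + ε / 4 := by rw [hv_def]; linarith
      linarith
  have hv_Ioo : v ∈ Ioo c (c + μ) := by
    constructor
    · have : u + ε / 8 ≤ v := by rw [hv_def]; linarith
      linarith
    · have h1 : v < u + ε / 4 := by rw [hv_def]; linarith
      linarith
  have hkK : k ∈ K := by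
    rw [hK_def, mem_Icc]
    constructor
    · exact Int.ceil_nonneg (div_nonneg (by linarith) hε8.le)
    · have h1 : (k : ℝ) * (ε / 8) < μ := by
        have := hv_Ioo.2
        rw [hv_def] at this
        linarith
      have h2 : (k : ℝ) * ε < 8 := by nlinarith
      have h3 : (k : ℝ) ≤ 8 / ε := (le_div_iff₀ hε).mpr h2.le
      calc k = ⌈(k : ℝ)⌉ := (Int.ceil_intCast k).symm
        _ ≤ ⌈8 / ε⌉ := Int.ceil_mono h3
  have hveq : μ * ((j : ℝ) + x) + (k : ℝ) * (ε / 8) = v := by rw [hv_def, hc_def]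
  refine mem_biUnion hjJ (mem_biUnion hkK ?_)
  refine ⟨⟨p, rfl⟩, ?_, ?_⟩
  · rw [hveq]; exact hIcc_sub hv_mem
  · rw [hveq]; exact hv_Ioo
end
end

section
/- Let γ : X → ℂ be a fixed generalized path, and define L(x,t,μ) = L^{x,t,μ}(γ). Then the function L(x,t,μ) from [0,1] × [0,1] × (0,1] to ℝ is lower semicontinuous (hence Borel measurable and Lebesgue integrable). -/
open Set MeasureTheory

noncomputable section

-- ===== auxiliary lemmas =====


lemma projPerp_eq (t : ℝ) (z : ℂ) :
    projPerp t z = (z * Complex.exp (-((t:ℂ) * (Real.pi:ℂ) * Complex.I))).im := by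
  have h : -(((t:ℂ) + 1/2) * (Real.pi:ℂ) * Complex.I)
      = -((t:ℂ) * (Real.pi:ℂ) * Complex.I) + (-((Real.pi:ℂ)/2)) * Complex.I := by ring
  have h2 : Complex.exp ((-((Real.pi:ℂ)/2)) * Complex.I) = -Complex.I := by
    rw [Complex.exp_mul_I]
    simp [Complex.cos_neg, Complex.sin_neg, Complex.cos_pi_div_two, Complex.sin_pi_div_two]
  rw [projPerp, h, Complex.exp_add, h2]
  simp [Complex.mul_re, Complex.mul_im]
  ring

/-- The map `p ↦ proj⊥_t(γ p)`. -/
def fpr {X : Type*} (γ : X → ℂ) (t : ℝ) (p : X) : ℝ := projPerp t (γ p)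

lemma continuous_fpr {X : Type*} [TopologicalSpace X] {γ : X → ℂ} (hγ : Continuous γ)
    (t : ℝ) : Continuous (fpr γ t) := by
  have : fpr γ t = fun p => ((γ p) * Complex.exp (-((t:ℂ) * (Real.pi:ℂ) * Complex.I))).im := by
    funext p; exact projPerp_eq t (γ p)
  rw [this]
  exact Complex.continuous_im.comp ((hγ.mul continuous_const))

lemma mem_Strip_iff {x t μ : ℝ} (hμ : 0 < μ) {j : ℤ} {z : ℂ} :
    z ∈ Strip x t μ j ↔ projPerp t z ∈ Icc (μ*(j+x)) (μ*(j+x)+μ) := by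
  rw [projPerp_eq]
  constructor
  · rintro ⟨w, ⟨h1, h2⟩, rfl⟩
    have hc : ((μ:ℂ) * Complex.exp ((t : ℂ) * (Real.pi : ℂ) * Complex.I) *
        (w + (x : ℂ) * Complex.I) * Complex.exp (-((t:ℂ) * (Real.pi:ℂ) * Complex.I)))
        = (μ:ℂ) * (w + (x:ℂ) * Complex.I) := by
      rw [Complex.exp_neg]
      field_simp
    rw [hc]
    have him : ((μ:ℂ) * (w + (x:ℂ) * Complex.I)).im = μ * (w.im + x) := by
      simp [Complex.mul_im, Complex.add_im, Complex.add_re]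
    rw [him]
    constructor
    · nlinarith
    · nlinarith
  · intro h
    obtain ⟨h1, h2⟩ := h
    refine ⟨z * Complex.exp (-((t:ℂ) * (Real.pi:ℂ) * Complex.I)) / (μ:ℂ) - (x:ℂ) * Complex.I,
      ⟨?_, ?_⟩, ?_⟩
    · have : (z * Complex.exp (-((t:ℂ) * (Real.pi:ℂ) * Complex.I)) / (μ:ℂ) - (x:ℂ) * Complex.I).im
          = (z * Complex.exp (-((t:ℂ) * (Real.pi:ℂ) * Complex.I))).im / μ - x := by
        simp [Complex.sub_im, Complex.div_ofReal_im]
      rw [this, le_sub_iff_add_le, le_div_iff₀ hμ]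
      nlinarith
    · have : (z * Complex.exp (-((t:ℂ) * (Real.pi:ℂ) * Complex.I)) / (μ:ℂ) - (x:ℂ) * Complex.I).im
          = (z * Complex.exp (-((t:ℂ) * (Real.pi:ℂ) * Complex.I))).im / μ - x := by
        simp [Complex.sub_im, Complex.div_ofReal_im]
      rw [this, sub_le_iff_le_add, div_le_iff₀ hμ]
      nlinarith
    · rw [Complex.exp_neg]
      have hμ' : (μ:ℂ) ≠ 0 := by exact_mod_cast hμ.ne'
      field_simp
      ring

lemma preimage_strip {X : Type*} (γ : X → ℂ) {x t μ : ℝ} (hμ : 0 < μ) (j : ℤ) :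
    γ ⁻¹' Strip x t μ j = fpr γ t ⁻¹' Icc (μ*(j+x)) (μ*(j+x)+μ) := by
  ext p
  exact mem_Strip_iff hμ

lemma normT_eq {X : Type*} (γ : X → ℂ) (t : ℝ) (C : Set X) :
    normT t (γ '' C) = Metric.diam (fpr γ t '' C) := by
  rw [normT, Set.image_image]
  rfl

/-- The set of which `Lfn` is the supremum. -/
def LSet {X : Type*} [TopologicalSpace X] (γ : X → ℂ) (x t μ : ℝ) : Set ℝ :=
  {r : ℝ | ∃ (N : ℕ) (e : Fin N → Set X), Function.Injective e ∧
    (∀ n, e n ∈ ndComponents γ x t μ) ∧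
    r = ∑ n : Fin N, normT t (γ '' e n) / (2 : ℝ) ^ (n : ℕ)}

lemma Lfn_eq_sSup {X : Type*} [TopologicalSpace X] (γ : X → ℂ) (x t μ : ℝ) :
    Lfn γ x t μ = sSup (LSet γ x t μ) := rfl

lemma zero_mem_LSet {X : Type*} [TopologicalSpace X] (γ : X → ℂ) (x t μ : ℝ) :
    (0:ℝ) ∈ LSet γ x t μ :=
  ⟨0, Fin.elim0, fun a => a.elim0, fun n => n.elim0, by simp⟩

lemma ndComponents_spec {X : Type*} [TopologicalSpace X] {γ : X → ℂ} {x t μ : ℝ}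
    (hμ : 0 < μ) {C : Set X} (hC : C ∈ ndComponents γ x t μ) :
    ∃ j : ℤ, ∃ q, q ∈ fpr γ t ⁻¹' Icc (μ*(j+x)) (μ*(j+x)+μ) ∧
      C = connectedComponentIn (fpr γ t ⁻¹' Icc (μ*(j+x)) (μ*(j+x)+μ)) q := by
  obtain ⟨⟨j, q, hq, hCeq⟩, -⟩ := hC
  rw [preimage_strip γ hμ j] at hq hCeq
  exact ⟨j, q, hq, hCeq⟩

lemma ndComponents_sub {X : Type*} [TopologicalSpace X] {γ : X → ℂ} {x t μ : ℝ}
    (hμ : 0 < μ) {C : Set X} (hC : C ∈ ndComponents γ x t μ) :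
    ∃ j : ℤ, fpr γ t '' C ⊆ Icc (μ*(j+x)) (μ*(j+x)+μ) := by
  obtain ⟨j, q, hq, hCeq⟩ := ndComponents_spec hμ hC
  refine ⟨j, ?_⟩
  rw [hCeq, Set.image_subset_iff]
  exact connectedComponentIn_subset _ _

lemma normT_le_of_mem {X : Type*} [TopologicalSpace X] {γ : X → ℂ} {x t μ : ℝ}
    (hμ : 0 < μ) {C : Set X} (hC : C ∈ ndComponents γ x t μ) :
    normT t (γ '' C) ≤ μ := by
  obtain ⟨j, hsub⟩ := ndComponents_sub hμ hC
  rw [normT_eq]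
  calc Metric.diam (fpr γ t '' C) ≤ Metric.diam (Icc (μ*(j+x)) (μ*(j+x)+μ)) :=
        Metric.diam_mono hsub (Metric.isBounded_Icc _ _)
    _ = μ := by rw [Real.diam_Icc (by linarith)]; ring

lemma normT_pos_of_mem {X : Type*} [TopologicalSpace X] {γ : X → ℂ} {x t μ : ℝ}
    (hμ : 0 < μ) {C : Set X} (hC : C ∈ ndComponents γ x t μ) :
    0 < normT t (γ '' C) := by
  obtain ⟨j, hsub⟩ := ndComponents_sub hμ hC
  obtain ⟨u, hu, v, hv, huv⟩ := hC.2
  rw [Set.image_image] at hu hv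
  have hu' : u ∈ fpr γ t '' C := hu
  have hv' : v ∈ fpr γ t '' C := hv
  rw [normT_eq]
  have hb : Bornology.IsBounded (fpr γ t '' C) := (Metric.isBounded_Icc _ _).subset hsub
  calc (0:ℝ) < dist u v := dist_pos.mpr huv
    _ ≤ Metric.diam (fpr γ t '' C) := Metric.dist_le_diam_of_mem hb hu' hv'

lemma LSet_le_two {X : Type*} [TopologicalSpace X] {γ : X → ℂ} {x t μ : ℝ}
    (hμ : 0 < μ) (hμ1 : μ ≤ 1) : ∀ r ∈ LSet γ x t μ, r ≤ 2 := by
  rintro r ⟨N, e, -, hmem, rfl⟩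
  calc ∑ n : Fin N, normT t (γ '' e n) / (2 : ℝ) ^ (n : ℕ)
      ≤ ∑ n : Fin N, (1:ℝ) / 2 ^ (n : ℕ) := by
        apply Finset.sum_le_sum
        intro n _
        gcongr
        exact le_trans (normT_le_of_mem hμ (hmem n)) hμ1
    _ ≤ 2 := by
        simp only [← one_div_pow]
        rw [Fin.sum_univ_eq_sum_range (fun n => ((1:ℝ)/2) ^ n) N]
        exact sum_geometric_two_le N

lemma bddAbove_LSet {X : Type*} [TopologicalSpace X] {γ : X → ℂ} {x t μ : ℝ}
    (hμ : 0 < μ) (hμ1 : μ ≤ 1) : BddAbove (LSet γ x t μ) :=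
  ⟨2, fun _ hr => LSet_le_two hμ hμ1 _ hr⟩

lemma Lfn_nonneg {X : Type*} [TopologicalSpace X] {γ : X → ℂ} {x t μ : ℝ}
    (hμ : 0 < μ) (hμ1 : μ ≤ 1) : 0 ≤ Lfn γ x t μ :=
  le_csSup (bddAbove_LSet hμ hμ1) (zero_mem_LSet γ x t μ)

lemma Lfn_le_two {X : Type*} [TopologicalSpace X] {γ : X → ℂ} {x t μ : ℝ}
    (hμ : 0 < μ) (hμ1 : μ ≤ 1) : Lfn γ x t μ ≤ 2 :=
  csSup_le ⟨0, zero_mem_LSet γ x t μ⟩ (LSet_le_two hμ hμ1)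

lemma fpr_close {X : Type*} [TopologicalSpace X] [CompactSpace X] {γ : X → ℂ}
    (hγ : Continuous γ) (t : ℝ) {ε : ℝ} (hε : 0 < ε) :
    ∀ᶠ t' in nhds t, ∀ p : X, |fpr γ t' p - fpr γ t p| ≤ ε := by
  obtain ⟨R, hR⟩ := (isCompact_range hγ).isBounded.subset_closedBall 0
  set R' : ℝ := |R| + 1 with hR'
  have hR'pos : 0 < R' := by positivity
  have hbound : ∀ p : X, ‖γ p‖ ≤ R' := by
    intro p
    have h1 : γ p ∈ Metric.closedBall 0 R := hR ⟨p, rfl⟩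
    rw [Metric.mem_closedBall, dist_zero_right] at h1
    calc ‖γ p‖ ≤ R := h1
      _ ≤ |R| := le_abs_self R
      _ ≤ R' := by simp [hR']
  set E : ℝ → ℂ := fun s => Complex.exp (-((s:ℂ) * (Real.pi:ℂ) * Complex.I)) with hE
  have hEcont : Continuous E := by
    apply Complex.continuous_exp.comp
    continuity
  have hev : ∀ᶠ t' in nhds t, E t' ∈ Metric.closedBall (E t) (ε / R') :=
    hEcont.continuousAt.tendsto (Metric.closedBall_mem_nhds (E t) (by positivity))
  filter_upwards [hev] with t' ht' p
  have hdist : ‖E t' - E t‖ ≤ ε / R' := by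
    rw [Metric.mem_closedBall, Complex.dist_eq] at ht'
    exact ht'
  have heq : fpr γ t' p - fpr γ t p = ((γ p) * (E t' - E t)).im := by
    rw [fpr, fpr, projPerp_eq, projPerp_eq, mul_sub, Complex.sub_im]
  rw [heq]
  calc |((γ p) * (E t' - E t)).im| ≤ ‖(γ p) * (E t' - E t)‖ :=
        Complex.abs_im_le_norm _
    _ = ‖γ p‖ * ‖E t' - E t‖ := norm_mul _ _
    _ ≤ R' * (ε / R') := by
        apply mul_le_mul (hbound p) hdist (norm_nonneg _) (le_of_lt hR'pos)
    _ = ε := by field_simp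


lemma isCompact_connectedComponentIn {Y : Type*} [TopologicalSpace Y] [T2Space Y]
    {F : Set Y} (hF : IsCompact F) (p : Y) : IsCompact (connectedComponentIn F p) := by
  by_cases hp : p ∈ F
  · rw [connectedComponentIn_eq_image hp]
    have : CompactSpace F := isCompact_iff_compactSpace.mp hF
    exact (isClosed_connectedComponent.isCompact).image continuous_subtype_val
  · rw [connectedComponentIn_eq_empty hp]; exact isCompact_empty

lemma nested_components {Y : Type*} [TopologicalSpace Y] [T2Space Y] [NormalSpace Y]
    {F : ℕ → Set Y} (hmono : ∀ k l, k ≤ l → F l ⊆ F k) (hcomp : ∀ k, IsCompact (F k))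
    {p q : Y} (hq : ∀ k, q ∈ connectedComponentIn (F k) p) :
    q ∈ connectedComponentIn (⋂ k, F k) p := by
  by_contra hnot
  have hpF : ∀ k, p ∈ F k := fun k => connectedComponentIn_nonempty_iff.mp ⟨q, hq k⟩
  have hqF : ∀ k, q ∈ F k := fun k => connectedComponentIn_subset _ _ (hq k)
  have hFclosed : ∀ k, IsClosed (F k) := fun k => (hcomp k).isClosed
  set Fi := ⋂ k, F k with hFi
  have hFiC : IsCompact Fi := (hcomp 0).of_isClosed_subset
    (isClosed_iInter hFclosed) (iInter_subset _ 0)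
  have hpFi : p ∈ Fi := mem_iInter.mpr hpF
  have hqFi : q ∈ Fi := mem_iInter.mpr hqF
  have : CompactSpace Fi := isCompact_iff_compactSpace.mp hFiC
  have hq' : (⟨q, hqFi⟩ : Fi) ∉ connectedComponent (⟨p, hpFi⟩ : Fi) := by
    intro hmem
    apply hnot
    rw [connectedComponentIn_eq_image hpFi]
    exact ⟨⟨q, hqFi⟩, hmem, rfl⟩
  rw [connectedComponent_eq_iInter_isClopen] at hq'
  simp only [mem_iInter, not_forall] at hq'
  obtain ⟨⟨Z, hZclopen, hpZ⟩, hqZ⟩ := hq'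
  have hqZ' : (⟨q, hqFi⟩ : Fi) ∉ Z := hqZ
  set A : Set Y := Subtype.val '' Z with hA
  set B : Set Y := Subtype.val '' Zᶜ with hB
  have hAc : IsCompact A := (hZclopen.isClosed.isCompact).image continuous_subtype_val
  have hBc : IsCompact B := ((isClosed_compl_iff.mpr hZclopen.isOpen).isCompact).image
    continuous_subtype_val
  have hAB : Disjoint A B := by
    rw [Set.disjoint_left]
    rintro y ⟨a, haZ, rfl⟩ ⟨b, hbZ, hba⟩
    cases Subtype.val_injective hba
    exact hbZ haZ
  obtain ⟨U, V, hUo, hVo, hAU, hBV, hUV⟩ :=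
    NormalSpace.normal A B hAc.isClosed hBc.isClosed hAB
  have hcover : Fi ⊆ U ∪ V := by
    intro y hy
    by_cases hyZ : (⟨y, hy⟩ : Fi) ∈ Z
    · exact Or.inl (hAU ⟨⟨y, hy⟩, hyZ, rfl⟩)
    · exact Or.inr (hBV ⟨⟨y, hy⟩, hyZ, rfl⟩)
  have hGempty : (F 0) ∩ ⋂ k, (F k ∩ (U ∪ V)ᶜ) = ∅ := by
    apply eq_empty_of_subset_empty
    intro y hy
    obtain ⟨-, hy2⟩ := hy
    rw [mem_iInter] at hy2
    have hyFi : y ∈ Fi := mem_iInter.mpr (fun k => (hy2 k).1)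
    exact (hy2 0).2 (hcover hyFi)
  obtain ⟨u, hu⟩ := (hcomp 0).elim_finite_subfamily_closed _
    (fun k => (hFclosed k).inter (hUo.union hVo).isClosed_compl) hGempty
  set k₀ := u.sup id with hk₀
  have hsub : F k₀ ∩ (U ∪ V)ᶜ ⊆ F 0 ∩ ⋂ k ∈ u, (F k ∩ (U ∪ V)ᶜ) := by
    intro y hy
    refine ⟨hmono 0 k₀ (Nat.zero_le _) hy.1, mem_iInter₂.mpr ?_⟩
    intro k hk
    exact ⟨hmono k k₀ (Finset.le_sup (f := id) hk) hy.1, hy.2⟩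
  have hempty : F k₀ ⊆ U ∪ V := by
    intro y hy
    by_contra hyn
    have h0 : y ∈ F 0 ∩ ⋂ k ∈ u, (F k ∩ (U ∪ V)ᶜ) := hsub ⟨hy, hyn⟩
    rw [hu] at h0
    exact h0
  have hD : IsPreconnected (connectedComponentIn (F k₀) p) := isPreconnected_connectedComponentIn
  have hDU : (connectedComponentIn (F k₀) p ∩ U).Nonempty :=
    ⟨p, mem_connectedComponentIn (hpF k₀), hAU ⟨⟨p, hpFi⟩, hpZ, rfl⟩⟩
  have hDV : (connectedComponentIn (F k₀) p ∩ V).Nonempty :=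
    ⟨q, hq k₀, hBV ⟨⟨q, hqFi⟩, hqZ', rfl⟩⟩
  obtain ⟨y, -, hyU, hyV⟩ := hD U V hUo hVo
    (subset_trans (connectedComponentIn_subset _ _) hempty) hDU hDV
  exact (Set.disjoint_left.mp hUV hyU) hyV

lemma span_lemma {Y : Type*} [TopologicalSpace Y] [T2Space Y] {K : Set Y} (hK : IsCompact K)
    (hKc : IsPreconnected K) {g : Y → ℝ} (hg : ContinuousOn g K) {c d : ℝ} (hcd : c < d)
    {p₀ p₁ : Y} (h0 : p₀ ∈ K) (h1 : p₁ ∈ K) (hg0 : g p₀ ≤ c) (hg1 : d ≤ g p₁) :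
    ∃ L : Set Y, L ⊆ K ∧ IsPreconnected L ∧ (∀ p ∈ L, g p ∈ Icc c d) ∧
      (∃ a ∈ L, g a = c) ∧ (∃ b ∈ L, g b = d) := by
  classical
  set M : Set Y := K ∩ g ⁻¹' (Icc c d) with hM
  have hKclosed : IsClosed K := hK.isClosed
  have hMclosed : IsClosed M := hg.preimage_isClosed_of_isClosed hKclosed isClosed_Icc
  have hMcompact : IsCompact M := hK.of_isClosed_subset hMclosed inter_subset_left
  have : CompactSpace M := isCompact_iff_compactSpace.mp hMcompact
  have hgM : ContinuousOn g M := hg.mono inter_subset_left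
  have hgrM : Continuous (M.restrict g) := hgM.restrict
  -- the level sets inside the subtype
  set A : Set M := (M.restrict g) ⁻¹' {c} with hAdef
  set B : Set M := (M.restrict g) ⁻¹' {d} with hBdef
  have hAclosed : IsClosed A := (isClosed_singleton).preimage hgrM
  have hBclosed : IsClosed B := (isClosed_singleton).preimage hgrM
  have hAcompact : IsCompact A := hAclosed.isCompact
  have hBcompact : IsCompact B := hBclosed.isCompact
  -- claim: some connected component of M meets both A and B
  have claim : ∃ a : M, a ∈ A ∧ (connectedComponent a ∩ B).Nonempty := by
    by_contra hno
    push_neg at hno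
    -- for each a ∈ A find clopen V ∋ a missing B
    have hstep : ∀ a : M, a ∈ A → ∃ V : Set M, IsClopen V ∧ a ∈ V ∧ V ∩ B = ∅ := by
      intro a ha
      have hint : B ∩ ⋂ (s : {Z : Set M // IsClopen Z ∧ a ∈ Z}), (s : Set M) = ∅ := by
        rw [← connectedComponent_eq_iInter_isClopen a]
        rw [← Set.not_nonempty_iff_eq_empty]
        intro ⟨y, hyB, hyC⟩
        exact (Set.not_nonempty_iff_eq_empty.mpr (hno a ha) : _) ⟨y, hyC, hyB⟩
      obtain ⟨u, hu⟩ := hBcompact.elim_finite_subfamily_closed _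
        (fun s => s.2.1.isClosed) hint
      refine ⟨⋂ s ∈ u, (s : Set M), isClopen_biInter_finset (fun s _ => s.2.1), ?_, ?_⟩
      · exact mem_iInter₂.mpr (fun s _ => s.2.2)
      · rw [← Set.not_nonempty_iff_eq_empty]
        intro ⟨y, hyV, hyB⟩
        have : y ∈ B ∩ ⋂ s ∈ u, (s : Set M) := ⟨hyB, hyV⟩
        rw [hu] at this
        exact this
    choose V hVclopen hVmem hVB using hstep
    -- cover A by the V's
    obtain ⟨tA, htA⟩ := hAcompact.elim_finite_subcover
      (fun a : A => if h : (a : M) ∈ A then V a h else ∅)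
      (by intro a; by_cases h : (a : M) ∈ A
          · simp only [h, dif_pos]; exact (hVclopen _ _).isOpen
          · simp only [h, dif_neg, not_false_iff]; exact isOpen_empty)
      (by intro y hy; exact mem_iUnion.mpr ⟨⟨y, hy⟩, by simp [hy, hVmem y hy]⟩)
    set U : Set M := ⋃ a ∈ tA, (if h : (a : M) ∈ A then V a h else ∅) with hUdef
    have hUclopen : IsClopen U := by
      apply isClopen_biUnion_finset
      intro a _
      by_cases h : (a : M) ∈ A
      · simp only [h, dif_pos]; exact hVclopen _ _
      · simp only [h, dif_neg, not_false_iff]; exact isClopen_empty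
    have hAU : A ⊆ U := htA
    have hUB : U ∩ B = ∅ := by
      rw [← Set.not_nonempty_iff_eq_empty]
      intro ⟨y, hyU, hyB⟩
      obtain ⟨a, ha, hya⟩ := mem_iUnion₂.mp hyU
      by_cases h : (a : M) ∈ A
      · rw [dif_pos h] at hya
        have : y ∈ V a h ∩ B := ⟨hya, hyB⟩
        rw [hVB a h] at this
        exact this
      · rw [dif_neg h] at hya
        exact hya
    -- build separation of K
    set E₁ : Set Y := (K ∩ g ⁻¹' (Iic c)) ∪ (Subtype.val '' U) with hE₁
    set E₂ : Set Y := (K ∩ g ⁻¹' (Ici d)) ∪ (Subtype.val '' Uᶜ) with hE₂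
    have hUc : IsCompact (Subtype.val '' U : Set Y) :=
      (hUclopen.isClosed.isCompact).image continuous_subtype_val
    have hUcc : IsCompact (Subtype.val '' Uᶜ : Set Y) :=
      ((isClosed_compl_iff.mpr hUclopen.isOpen).isCompact).image continuous_subtype_val
    have hE₁closed : IsClosed E₁ :=
      (hg.preimage_isClosed_of_isClosed hKclosed isClosed_Iic).union hUc.isClosed
    have hE₂closed : IsClosed E₂ :=
      (hg.preimage_isClosed_of_isClosed hKclosed isClosed_Ici).union hUcc.isClosed
    have hKcover : K ⊆ E₁ ∪ E₂ := by
      intro y hy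
      by_cases h1' : g y ≤ c
      · exact Or.inl (Or.inl ⟨hy, h1'⟩)
      by_cases h2' : d ≤ g y
      · exact Or.inr (Or.inl ⟨hy, h2'⟩)
      push_neg at h1' h2'
      have hyM : y ∈ M := ⟨hy, le_of_lt h1', le_of_lt h2'⟩
      by_cases h3 : (⟨y, hyM⟩ : M) ∈ U
      · exact Or.inl (Or.inr ⟨⟨y, hyM⟩, h3, rfl⟩)
      · exact Or.inr (Or.inr ⟨⟨y, hyM⟩, h3, rfl⟩)
    have hE1ne : (K ∩ E₁).Nonempty := ⟨p₀, h0, Or.inl ⟨h0, hg0⟩⟩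
    have hE2ne : (K ∩ E₂).Nonempty := ⟨p₁, h1, Or.inl ⟨h1, hg1⟩⟩
    obtain ⟨y, hyK, hy1, hy2⟩ :=
      isPreconnected_closed_iff.mp hKc E₁ E₂ hE₁closed hE₂closed hKcover hE1ne hE2ne
    -- derive contradiction
    rcases hy1 with ⟨-, hc'⟩ | ⟨m, hmU, rfl⟩
    · rcases hy2 with ⟨-, hd'⟩ | ⟨m, hmUc, rfl⟩
      · have hc'' : g y ≤ c := hc'
        have hd'' : d ≤ g y := hd'
        linarith
      · -- g ↑m ≤ c and m ∈ Uᶜ ; but then m ∈ A ⊆ U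
        have hmA : m ∈ A := by
          have h2 := m.2.2
          have hc'' : g (m:Y) ≤ c := hc'
          exact le_antisymm hc'' h2.1
        exact hmUc (hAU hmA)
    · rcases hy2 with ⟨-, hd'⟩ | ⟨m', hmUc, hmm⟩
      · -- m ∈ U and d ≤ g ↑m : then m ∈ B, but U ∩ B = ∅
        have hmB : m ∈ B := by
          have h2 := m.2.2
          have hd'' : d ≤ g (m:Y) := hd'
          exact le_antisymm h2.2 hd''
        have : (m : M) ∈ U ∩ B := ⟨hmU, hmB⟩
        rw [hUB] at this
        exact this
      · cases Subtype.val_injective hmm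
        exact hmUc hmU
  obtain ⟨a, haA, b, hbC, hbB⟩ := claim
  refine ⟨Subtype.val '' connectedComponent a, ?_, ?_, ?_, ?_, ?_⟩
  · exact subset_trans (image_subset_range _ _) (by rw [Subtype.range_coe]; exact inter_subset_left)
  · exact (isPreconnected_connectedComponent).image _ continuous_subtype_val.continuousOn
  · rintro p ⟨m, -, rfl⟩
    exact m.2.2
  · exact ⟨a, ⟨a, mem_connectedComponent, rfl⟩, haA⟩
  · exact ⟨b, ⟨b, hbC, rfl⟩, hbB⟩

lemma Lfn_LSC {X : Type*} [MetricSpace X] [CompactSpace X] [ConnectedSpace X]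
    (γ : X → ℂ) (hγ : Continuous γ) :
    LowerSemicontinuousOn (fun P : ℝ × ℝ × ℝ => Lfn γ P.1 P.2.1 P.2.2)
      (Icc (0:ℝ) 1 ×ˢ Icc (0:ℝ) 1 ×ˢ Ioc (0:ℝ) 1) := by
  classical
  intro P hP y hy
  obtain ⟨x, t, μ⟩ := P
  have hμ : 0 < μ := hP.2.2.1
  have hμ1 : μ ≤ 1 := hP.2.2.2
  rcases lt_or_ge y 0 with hy0 | hy0
  · filter_upwards [eventually_mem_nhdsWithin] with Q hQ
    exact lt_of_lt_of_le hy0 (Lfn_nonneg hQ.2.2.1 hQ.2.2.2)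
  -- main case
  simp only [Lfn_eq_sSup] at hy
  obtain ⟨r, hrmem, hyr⟩ := exists_lt_of_lt_csSup ⟨0, zero_mem_LSet γ x t μ⟩ hy
  obtain ⟨N, e, hinj, hmem, hrdef⟩ := hrmem
  set a : Fin N → ℝ := fun n => normT t (γ '' e n) with ha
  have hrdef' : r = ∑ n : Fin N, a n / 2^(n:ℕ) := by rw [hrdef]
  have hapos : ∀ n, 0 < a n := fun n => normT_pos_of_mem hμ (hmem n)
  choose j q hqmem hqeq using fun n => ndComponents_spec hμ (hmem n)
  have hqen : ∀ k, q k ∈ e k := fun k => by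
    rw [hqeq k]; exact mem_connectedComponentIn (hqmem k)
  have hensub : ∀ k, e k ⊆ fpr γ t ⁻¹' Icc (μ*(j k + x)) (μ*(j k + x)+μ) := fun k => by
    rw [hqeq k]; exact connectedComponentIn_subset _ _
  have hN : 0 < N := by
    rcases Nat.eq_zero_or_pos N with h | h
    · exfalso
      subst h
      simp only [Finset.univ_eq_empty, Finset.sum_empty] at hrdef
      subst hrdef
      linarith
    · exact h
  haveI hNE : Nonempty (Fin N) := Fin.pos_iff_nonempty.mp hN
  -- pairwise separation of distinct components over the same strip
  have hpair : ∀ n m : Fin N, ∃ δ : ℝ, 0 < δ ∧ (n ≠ m → j n = j m →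
      q m ∉ connectedComponentIn
        (fpr γ t ⁻¹' Icc (μ*(j n + x) - δ) (μ*(j n + x) + μ + δ)) (q n)) := by
    intro n m
    by_cases hc : n ≠ m ∧ j n = j m
    · obtain ⟨hne, hjeq⟩ := hc
      by_contra hno
      push_neg at hno
      have hall : ∀ k : ℕ, q m ∈ connectedComponentIn
          (fpr γ t ⁻¹' Icc (μ*(j n + x) - 1/(k+1)) (μ*(j n + x) + μ + 1/(k+1))) (q n) :=
        fun k => (hno (1/(k+1)) (by positivity)).2.2
      have hkey := nested_components
        (F := fun k : ℕ => fpr γ t ⁻¹' Icc (μ*(j n + x) - 1/(k+1)) (μ*(j n + x) + μ + 1/(k+1)))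
        (fun k l hkl => by
          have h1 : (1:ℝ)/(↑l+1) ≤ 1/(↑k+1) := by
            apply one_div_le_one_div_of_le (by positivity)
            have : (k:ℝ) ≤ l := by exact_mod_cast hkl
            linarith
          exact preimage_mono (Icc_subset_Icc (by linarith) (by linarith)))
        (fun k => (isClosed_Icc.preimage (continuous_fpr hγ t)).isCompact)
        hall
      have hiInter : (⋂ k : ℕ, fpr γ t ⁻¹' Icc (μ*(j n + x) - 1/(k+1)) (μ*(j n + x) + μ + 1/(k+1)))
          = fpr γ t ⁻¹' Icc (μ*(j n + x)) (μ*(j n + x)+μ) := by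
        ext p
        simp only [mem_iInter, mem_preimage, mem_Icc]
        constructor
        · intro h
          constructor
          · by_contra hlt
            push_neg at hlt
            obtain ⟨k, hk⟩ := exists_nat_one_div_lt (show 0 < μ*(j n + x) - fpr γ t p by linarith)
            have := (h k).1
            linarith
          · by_contra hlt
            push_neg at hlt
            obtain ⟨k, hk⟩ := exists_nat_one_div_lt
              (show 0 < fpr γ t p - (μ*(j n + x) + μ) by linarith)
            have := (h k).2
            linarith
        · intro h k
          have hk : (0:ℝ) < 1/(k+1) := by positivity
          exact ⟨by linarith [h.1], by linarith [h.2]⟩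
      rw [hiInter] at hkey
      have h1 := connectedComponentIn_eq hkey
      have heq : e n = e m := by
        rw [hqeq n, hqeq m, h1, hjeq]
      exact absurd (hinj heq) hne
    · exact ⟨1, one_pos, fun h1 h2 => absurd ⟨h1, h2⟩ hc⟩
  choose δp hδpos hδsep using hpair
  -- choice of ε
  set amin : ℝ := Finset.univ.inf' Finset.univ_nonempty a with hamin
  set δmin : ℝ := Finset.univ.inf' Finset.univ_nonempty
    (fun nm : Fin N × Fin N => δp nm.1 nm.2) with hδmin
  have haminpos : 0 < amin := by
    rw [hamin, Finset.lt_inf'_iff]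
    exact fun n _ => hapos n
  have hδminpos : 0 < δmin := by
    rw [hδmin, Finset.lt_inf'_iff]
    exact fun nm _ => hδpos nm.1 nm.2
  set ε : ℝ := min (min (amin/8) (δmin/4)) ((r - y)/16) with hε'
  have hε : 0 < ε := by
    rw [hε']
    simp only [lt_min_iff]
    exact ⟨⟨by linarith, by linarith⟩, by linarith⟩
  have hεa : ∀ n, 8*ε ≤ a n := by
    intro n
    have h1 : ε ≤ amin/8 := le_trans (min_le_left _ _) (min_le_left _ _)
    have h2 : amin ≤ a n := Finset.inf'_le a (Finset.mem_univ n)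
    linarith
  have hεδ : ∀ n m, 2*ε ≤ δp n m := by
    intro n m
    have h1 : ε ≤ δmin/4 := le_trans (min_le_left _ _) (min_le_right _ _)
    have h2 : δmin ≤ δp n m :=
      Finset.inf'_le (fun nm : Fin N × Fin N => δp nm.1 nm.2) (Finset.mem_univ (n, m))
    linarith
  have hεr : 16*ε ≤ r - y := by
    have h1 : ε ≤ (r-y)/16 := min_le_right _ _
    linarith
  -- the eventually conditions
  have haux : ∀ g : ℝ×ℝ×ℝ → ℝ, Continuous g →
      ∀ᶠ Q in nhdsWithin (x,t,μ) (Icc (0:ℝ) 1 ×ˢ Icc (0:ℝ) 1 ×ˢ Ioc (0:ℝ) 1),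
        |g Q - g (x,t,μ)| ≤ ε := by
    intro g hg
    have h1 : ∀ᶠ Q in nhds ((x,t,μ) : ℝ×ℝ×ℝ), g Q ∈ Metric.closedBall (g (x,t,μ)) ε :=
      hg.continuousAt (Metric.closedBall_mem_nhds _ hε)
    apply Filter.Eventually.filter_mono nhdsWithin_le_nhds
    filter_upwards [h1] with Q hQ
    rw [Metric.mem_closedBall, Real.dist_eq] at hQ
    exact hQ
  have hev2 : ∀ᶠ Q : ℝ×ℝ×ℝ in nhdsWithin (x,t,μ) (Icc (0:ℝ) 1 ×ˢ Icc (0:ℝ) 1 ×ˢ Ioc (0:ℝ) 1),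
      ∀ p : X, |fpr γ Q.2.1 p - fpr γ t p| ≤ ε := by
    have h1 : ∀ᶠ t' in nhds t, ∀ p : X, |fpr γ t' p - fpr γ t p| ≤ ε := fpr_close hγ t hε
    have h2 : Filter.Tendsto (fun Q : ℝ×ℝ×ℝ => Q.2.1)
        (nhds ((x,t,μ) : ℝ×ℝ×ℝ)) (nhds t) := (continuous_fst.comp continuous_snd).continuousAt
    exact (h2.eventually h1).filter_mono nhdsWithin_le_nhds
  have hev3 : ∀ᶠ Q : ℝ×ℝ×ℝ in nhdsWithin (x,t,μ) (Icc (0:ℝ) 1 ×ˢ Icc (0:ℝ) 1 ×ˢ Ioc (0:ℝ) 1),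
      ∀ n : Fin N, |Q.2.2*(j n + Q.1) - μ*(j n + x)| ≤ ε ∧
        |Q.2.2*(j n + 1 + Q.1) - μ*(j n + 1 + x)| ≤ ε := by
    rw [Filter.eventually_all]
    intro n
    have hg1 : Continuous (fun Q : ℝ×ℝ×ℝ => Q.2.2*(j n + Q.1)) := by fun_prop
    have hg2 : Continuous (fun Q : ℝ×ℝ×ℝ => Q.2.2*(j n + 1 + Q.1)) := by fun_prop
    exact (haux _ hg1).and (haux _ hg2)
  filter_upwards [eventually_mem_nhdsWithin, hev2, hev3] with Q hQS hQf hQj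
  obtain ⟨x', t', μ'⟩ := Q
  dsimp only at hQf hQj
  have hμ' : 0 < μ' := hQS.2.2.1
  have hμ'1 : μ' ≤ 1 := hQS.2.2.2
  show y < Lfn γ x' t' μ'
  -- key construction of nearby components
  have key : ∀ n : Fin N, ∃ C' : Set X,
      (C' ∈ ndComponents γ x' t' μ') ∧
      (a n - 5*ε ≤ normT t' (γ '' C')) ∧
      (C' ⊆ fpr γ t ⁻¹' Icc (μ*(j n + x) - 2*ε) (μ*(j n + x) + μ + 2*ε)) ∧
      ((C' ∩ e n).Nonempty) ∧
      (∃ q', C' = connectedComponentIn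
        (fpr γ t' ⁻¹' Icc (μ'*(j n + x')) (μ'*(j n + x')+μ')) q') := by
    intro n
    have hencl : IsCompact (e n) := by
      rw [hqeq n]
      exact isCompact_connectedComponentIn
        ((isClosed_Icc.preimage (continuous_fpr hγ t)).isCompact) _
    have henconn : IsPreconnected (e n) := by
      rw [hqeq n]; exact isPreconnected_connectedComponentIn
    have hadiam : a n = Metric.diam (fpr γ t '' e n) := by
      simp only [ha]; exact normT_eq γ t (e n)
    have hpts : ∃ P0 P1, P0 ∈ e n ∧ P1 ∈ e n ∧ fpr γ t P0 ≤ fpr γ t P1 ∧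
        a n - ε < fpr γ t P1 - fpr γ t P0 := by
      by_contra hcon
      push_neg at hcon
      have hdle : Metric.diam (fpr γ t '' e n) ≤ a n - ε := by
        apply Metric.diam_le_of_forall_dist_le (by linarith [hεa n, hε])
        rintro u ⟨p0, hp0, rfl⟩ v ⟨p1, hp1, rfl⟩
        rw [Real.dist_eq]
        rcases le_total (fpr γ t p0) (fpr γ t p1) with h | h
        · rw [abs_sub_comm, abs_of_nonneg (by linarith)]
          exact hcon p0 p1 hp0 hp1 h
        · rw [abs_of_nonneg (by linarith)]
          exact hcon p1 p0 hp1 hp0 h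
      rw [← hadiam] at hdle
      linarith
    obtain ⟨P0, P1, hP0, hP1, hle, hfar⟩ := hpts
    have hg0' : fpr γ t' P0 ≤ fpr γ t P0 + 2*ε := by
      have h := (abs_le.mp (hQf P0)).2
      linarith
    have hg1' : fpr γ t P1 - 2*ε ≤ fpr γ t' P1 := by
      have h := (abs_le.mp (hQf P1)).1
      linarith
    have hcd : fpr γ t P0 + 2*ε < fpr γ t P1 - 2*ε := by
      linarith [hεa n, hfar, hε]
    obtain ⟨L, hLK, hLconn, hLIcc, ⟨pa, hpaL, hpac⟩, ⟨pb, hpbL, hpbd⟩⟩ :=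
      span_lemma hencl henconn ((continuous_fpr hγ t').continuousOn) hcd hP0 hP1 hg0' hg1'
    have hIccsub : Icc (fpr γ t P0 + 2*ε) (fpr γ t P1 - 2*ε)
        ⊆ Icc (μ'*(j n + x')) (μ'*(j n + x')+μ') := by
      apply Icc_subset_Icc
      · have h1 := (abs_le.mp (hQj n).1).2
        have h2 : μ*(j n + x) ≤ fpr γ t P0 := (hensub n hP0).1
        linarith
      · have h1 := (abs_le.mp (hQj n).2).1
        have h2 : fpr γ t P1 ≤ μ*(j n + x) + μ := (hensub n hP1).2
        have h3 : μ*((j n : ℝ) + 1 + x) = μ*(j n + x) + μ := by ring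
        have h4 : μ'*(j n + x') + μ' = μ'*((j n : ℝ) + 1 + x') := by ring
        linarith
    have hLsub : L ⊆ fpr γ t' ⁻¹' Icc (μ'*(j n + x')) (μ'*(j n + x')+μ') :=
      fun p hp => hIccsub (hLIcc p hp)
    have hLC' : L ⊆ connectedComponentIn
        (fpr γ t' ⁻¹' Icc (μ'*(j n + x')) (μ'*(j n + x')+μ')) pa :=
      hLconn.subset_connectedComponentIn hpaL hLsub
    refine ⟨connectedComponentIn
        (fpr γ t' ⁻¹' Icc (μ'*(j n + x')) (μ'*(j n + x')+μ')) pa,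
      ⟨⟨j n, pa, ?_, ?_⟩, ?_⟩, ?_, ?_, ?_, ⟨pa, rfl⟩⟩
    · rw [preimage_strip γ hμ' (j n)]
      exact hLsub hpaL
    · rw [preimage_strip γ hμ' (j n)]
    · -- nontrivial
      rw [Set.image_image]
      exact ⟨_, ⟨pa, hLC' hpaL, hpac⟩, _, ⟨pb, hLC' hpbL, hpbd⟩, ne_of_lt hcd⟩
    · -- norm bound
      rw [normT_eq]
      have hbd : Bornology.IsBounded (fpr γ t' '' connectedComponentIn
          (fpr γ t' ⁻¹' Icc (μ'*(j n + x')) (μ'*(j n + x')+μ')) pa) := by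
        apply (Metric.isBounded_Icc _ _).subset
        rw [Set.image_subset_iff]
        exact connectedComponentIn_subset _ _
      have hmem1 : (fpr γ t P0 + 2*ε) ∈ fpr γ t' '' connectedComponentIn
          (fpr γ t' ⁻¹' Icc (μ'*(j n + x')) (μ'*(j n + x')+μ')) pa := ⟨pa, hLC' hpaL, hpac⟩
      have hmem2 : (fpr γ t P1 - 2*ε) ∈ fpr γ t' '' connectedComponentIn
          (fpr γ t' ⁻¹' Icc (μ'*(j n + x')) (μ'*(j n + x')+μ')) pa := ⟨pb, hLC' hpbL, hpbd⟩
      have hcd' := Metric.dist_le_diam_of_mem hbd hmem1 hmem2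
      rw [Real.dist_eq, abs_of_nonpos (by linarith)] at hcd'
      linarith
    · -- inside the enlarged old strip preimage
      intro p hp
      have hp' := connectedComponentIn_subset _ _ hp
      have h1 := abs_le.mp (hQf p)
      have h2 := abs_le.mp (hQj n).1
      have h3 := abs_le.mp (hQj n).2
      have h4 : μ'*(j n + x') + μ' = μ'*((j n : ℝ) + 1 + x') := by ring
      have h5 : μ*((j n : ℝ) + 1 + x) = μ*(j n + x) + μ := by ring
      simp only [mem_preimage, mem_Icc] at hp' ⊢
      constructor
      · linarith [hp'.1, h1.1, h2.1]
      · linarith [hp'.2, h1.2, h3.2]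
    · -- meets e n
      exact ⟨pa, mem_connectedComponentIn (hLsub hpaL), hLK hpaL⟩
  choose C' hC'nd hC'norm hC'sub hC'int hC'rep using key
  -- injectivity
  have hinj' : Function.Injective C' := by
    intro n m hnm
    by_contra hne
    rcases eq_or_ne (j n) (j m) with hj | hj
    · -- same strip: contradicts the pairwise separation
      have henF : ∀ k, j k = j n → e k ⊆ fpr γ t ⁻¹'
          Icc (μ*(j n + x) - 2*ε) (μ*(j n + x) + μ + 2*ε) := by
        intro k hk p hp
        have h := hensub k hp
        rw [hk] at h
        exact ⟨by linarith [h.1], by linarith [h.2]⟩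
      have hsubF : ∀ k, j k = j n → C' k ⊆ connectedComponentIn
          (fpr γ t ⁻¹' Icc (μ*(j n + x) - 2*ε) (μ*(j n + x) + μ + 2*ε)) (q k) := by
        intro k hk
        obtain ⟨z, hzC, hze⟩ := hC'int k
        have hC'conn : IsPreconnected (C' k) := by
          obtain ⟨q', hrep⟩ := hC'rep k
          rw [hrep]; exact isPreconnected_connectedComponentIn
        have hCk : C' k ⊆ fpr γ t ⁻¹' Icc (μ*(j n + x) - 2*ε) (μ*(j n + x) + μ + 2*ε) := by
          intro p hp
          have h := hC'sub k hp
          rw [hk] at h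
          exact h
        have h1 : C' k ⊆ connectedComponentIn
            (fpr γ t ⁻¹' Icc (μ*(j n + x) - 2*ε) (μ*(j n + x) + μ + 2*ε)) z :=
          hC'conn.subset_connectedComponentIn hzC hCk
        have hekconn : IsPreconnected (e k) := by
          rw [hqeq k]; exact isPreconnected_connectedComponentIn
        have hDk : e k ⊆ connectedComponentIn
            (fpr γ t ⁻¹' Icc (μ*(j n + x) - 2*ε) (μ*(j n + x) + μ + 2*ε)) (q k) :=
          hekconn.subset_connectedComponentIn (hqen k) (henF k hk)
        have h2 : z ∈ connectedComponentIn
            (fpr γ t ⁻¹' Icc (μ*(j n + x) - 2*ε) (μ*(j n + x) + μ + 2*ε)) (q k) := hDk hze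
        rw [connectedComponentIn_eq h2]
        exact h1
      obtain ⟨z0, hz0C, hz0e⟩ := hC'int n
      have hz0n := hsubF n rfl hz0C
      have hz0m := hsubF m hj.symm (hnm ▸ hz0C)
      have hqmF : q m ∈ fpr γ t ⁻¹' Icc (μ*(j n + x) - 2*ε) (μ*(j n + x) + μ + 2*ε) :=
        henF m hj.symm (hqen m)
      have hqmn : q m ∈ connectedComponentIn
          (fpr γ t ⁻¹' Icc (μ*(j n + x) - 2*ε) (μ*(j n + x) + μ + 2*ε)) (q n) := by
        rw [connectedComponentIn_eq hz0n, ← connectedComponentIn_eq hz0m]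
        exact mem_connectedComponentIn hqmF
      apply hδsep n m hne hj
      refine connectedComponentIn_mono (q n) ?_ hqmn
      exact preimage_mono (Icc_subset_Icc (by linarith [hεδ n m]) (by linarith [hεδ n m]))
    · -- different strips
      obtain ⟨u, hu, v, hv, huv⟩ := (hC'nd n).2
      rw [Set.image_image] at hu hv
      have hu' : u ∈ fpr γ t' '' C' n := hu
      have hv' : v ∈ fpr γ t' '' C' n := hv
      have hsub' : ∀ k, fpr γ t' '' C' k ⊆ Icc (μ'*(j k + x')) (μ'*(j k + x')+μ') := by
        intro k
        obtain ⟨q', hrep⟩ := hC'rep k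
        rw [hrep, Set.image_subset_iff]
        exact connectedComponentIn_subset _ _
      have hun := hsub' n hu'
      have hvn := hsub' n hv'
      have hum := hsub' m (by rw [← hnm]; exact hu')
      have hvm := hsub' m (by rw [← hnm]; exact hv')
      rcases lt_or_gt_of_ne hj with h | h
      · have hcast : ((j n : ℝ) + 1) ≤ (j m : ℝ) := by exact_mod_cast Int.lt_iff_add_one_le.mp h
        have hh := mul_le_mul_of_nonneg_left
          (show ((j n:ℝ)+1+x') ≤ ((j m:ℝ)+x') by linarith) hμ'.le
        have hpin : μ'*((j n:ℝ) + x') + μ' ≤ μ'*((j m:ℝ) + x') := by nlinarith [hh]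
        exact huv (by linarith [hun.2, hum.1, hvn.2, hvm.1])
      · have hcast : ((j m : ℝ) + 1) ≤ (j n : ℝ) := by exact_mod_cast Int.lt_iff_add_one_le.mp h
        have hh := mul_le_mul_of_nonneg_left
          (show ((j m:ℝ)+1+x') ≤ ((j n:ℝ)+x') by linarith) hμ'.le
        have hpin : μ'*((j m:ℝ) + x') + μ' ≤ μ'*((j n:ℝ) + x') := by nlinarith [hh]
        exact huv (by linarith [hun.1, hum.2, hvn.1, hvm.2])
  -- conclusion
  have hsum : ∑ n : Fin N, (a n - 5*ε)/2^(n:ℕ)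
      ≤ ∑ n : Fin N, normT t' (γ '' C' n)/2^(n:ℕ) := by
    apply Finset.sum_le_sum
    intro n _
    gcongr
    exact hC'norm n
  have hmemLSet : (∑ n : Fin N, normT t' (γ '' C' n)/2^(n:ℕ)) ∈ LSet γ x' t' μ' :=
    ⟨N, C', hinj', hC'nd, rfl⟩
  have hLB : (∑ n : Fin N, normT t' (γ '' C' n)/2^(n:ℕ)) ≤ Lfn γ x' t' μ' := by
    rw [Lfn_eq_sSup]
    exact le_csSup (bddAbove_LSet hμ' hμ'1) hmemLSet
  have hsplit : ∑ n : Fin N, (a n - 5*ε)/2^(n:ℕ)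
      = (∑ n : Fin N, a n/2^(n:ℕ)) - 5*ε * ∑ n : Fin N, ((1:ℝ)/2)^(n:ℕ) := by
    rw [Finset.mul_sum, ← Finset.sum_sub_distrib]
    apply Finset.sum_congr rfl
    intro n _
    rw [one_div_pow]
    ring
  have hgeo : ∑ n : Fin N, ((1:ℝ)/2)^(n:ℕ) ≤ 2 := by
    rw [Fin.sum_univ_eq_sum_range (fun k => ((1:ℝ)/2)^k) N]
    exact sum_geometric_two_le N
  have hfinal : r - 10*ε ≤ ∑ n : Fin N, (a n - 5*ε)/2^(n:ℕ) := by
    rw [hsplit, ← hrdef']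
    nlinarith [hgeo, hε.le]
  linarith [hsum, hLB, hfinal, hεr, hε]

theorem Lfn_lowerSemicontinuousOn_aux
    {X : Type*} [MetricSpace X] [CompactSpace X] [ConnectedSpace X] [LocallyConnectedSpace X]
    (γ : X → ℂ) (hγ : Continuous γ) :
    LowerSemicontinuousOn (fun P : ℝ × ℝ × ℝ => Lfn γ P.1 P.2.1 P.2.2)
      (Icc (0:ℝ) 1 ×ˢ Icc (0:ℝ) 1 ×ˢ Ioc (0:ℝ) 1) ∧
    MeasureTheory.IntegrableOn (fun P : ℝ × ℝ × ℝ => Lfn γ P.1 P.2.1 P.2.2)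
      (Icc (0:ℝ) 1 ×ˢ Icc (0:ℝ) 1 ×ˢ Ioc (0:ℝ) 1) MeasureTheory.volume := by
  classical
  have hlsc := Lfn_LSC γ hγ
  refine ⟨hlsc, ?_⟩
  set S : Set (ℝ×ℝ×ℝ) := Icc (0:ℝ) 1 ×ˢ Icc (0:ℝ) 1 ×ˢ Ioc (0:ℝ) 1 with hS
  have hSmeas : MeasurableSet S :=
    measurableSet_Icc.prod (measurableSet_Icc.prod measurableSet_Ioc)
  set f : ℝ×ℝ×ℝ → ℝ := fun P => Lfn γ P.1 P.2.1 P.2.2 with hf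
  have hopen : ∀ c : ℝ, ∃ O : Set (ℝ×ℝ×ℝ), IsOpen O ∧ {P ∈ S | c < f P} = S ∩ O := by
    intro c
    have hU : ∀ P ∈ {P ∈ S | c < f P}, ∃ U : Set (ℝ×ℝ×ℝ), IsOpen U ∧ P ∈ U ∧
        U ∩ S ⊆ {Q | c < f Q} := by
      intro P hP
      have h1 := hlsc P hP.1 c hP.2
      exact mem_nhdsWithin.mp h1
    choose! U hUo hUP hUsub using hU
    refine ⟨⋃ P ∈ {P ∈ S | c < f P}, U P, isOpen_biUnion (fun P hP => hUo P hP), ?_⟩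
    ext Q
    constructor
    · intro hQ
      exact ⟨hQ.1, mem_iUnion₂.mpr ⟨Q, hQ, hUP Q hQ⟩⟩
    · rintro ⟨hQS, hQO⟩
      obtain ⟨P, hP, hQU⟩ := mem_iUnion₂.mp hQO
      exact ⟨hQS, hUsub P hP ⟨hQU, hQS⟩⟩
  choose O hOopen hOeq using hopen
  set g : ℝ×ℝ×ℝ → ℝ := S.indicator f with hg
  have hfnonneg : ∀ P ∈ S, 0 ≤ f P := fun P hP => Lfn_nonneg hP.2.2.1 hP.2.2.2
  have hfle : ∀ P ∈ S, f P ≤ 2 := fun P hP => Lfn_le_two hP.2.2.1 hP.2.2.2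
  have hgmeas : Measurable g := by
    apply measurable_of_Ioi
    intro c
    rcases le_or_gt 0 c with hc | hc
    · have heq : g ⁻¹' Ioi c = S ∩ O c := by
        ext Q
        simp only [mem_preimage, mem_Ioi, hg]
        constructor
        · intro h
          by_cases hQ : Q ∈ S
          · have h2 : Q ∈ {P ∈ S | c < f P} := ⟨hQ, by rwa [indicator_of_mem hQ] at h⟩
            rw [hOeq c] at h2
            exact h2
          · rw [indicator_of_notMem hQ] at h
            linarith
        · intro h
          have h2 : Q ∈ {P ∈ S | c < f P} := by rw [hOeq c]; exact h
          rw [indicator_of_mem h2.1]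
          exact h2.2
      rw [heq]
      exact hSmeas.inter (hOopen c).measurableSet
    · have heq : g ⁻¹' Ioi c = Sᶜ ∪ (S ∩ O c) := by
        ext Q
        simp only [mem_preimage, mem_Ioi, hg, mem_union, mem_compl_iff]
        constructor
        · intro h
          by_cases hQ : Q ∈ S
          · right
            have h2 : Q ∈ {P ∈ S | c < f P} := ⟨hQ, by rwa [indicator_of_mem hQ] at h⟩
            rw [hOeq c] at h2
            exact h2
          · exact Or.inl hQ
        · intro h
          rcases h with h | h
          · rw [indicator_of_notMem h]
            exact hc
          · have h2 : Q ∈ {P ∈ S | c < f P} := by rw [hOeq c]; exact h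
            rw [indicator_of_mem h2.1]
            exact h2.2
      rw [heq]
      exact hSmeas.compl.union (hSmeas.inter (hOopen c).measurableSet)
  have hSfin : MeasureTheory.volume S < ⊤ := by
    have hcalc : MeasureTheory.volume S
        = MeasureTheory.volume (Icc (0:ℝ) 1) *
          (MeasureTheory.volume (Icc (0:ℝ) 1) * MeasureTheory.volume (Ioc (0:ℝ) 1)) := by
      rw [hS, MeasureTheory.Measure.volume_eq_prod, MeasureTheory.Measure.prod_prod,
        MeasureTheory.Measure.volume_eq_prod, MeasureTheory.Measure.prod_prod]
    rw [hcalc, Real.volume_Icc, Real.volume_Ioc]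
    norm_num
  haveI : Fact (MeasureTheory.volume S < ⊤) := ⟨hSfin⟩
  have hgint : MeasureTheory.Integrable g (MeasureTheory.volume.restrict S) := by
    apply MeasureTheory.Integrable.mono' (MeasureTheory.integrable_const (2:ℝ))
      hgmeas.aestronglyMeasurable
    apply Filter.Eventually.of_forall
    intro P
    rw [Real.norm_eq_abs, abs_le]
    by_cases hP : P ∈ S
    · rw [hg, indicator_of_mem hP]
      exact ⟨by linarith [hfnonneg P hP], hfle P hP⟩
    · rw [hg, indicator_of_notMem hP]
      norm_num
  rw [MeasureTheory.IntegrableOn]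
  exact hgint.congr (indicator_ae_eq_restrict hSmeas)


/-- **Lemma 2.3.** For a fixed generalized path `γ : X → ℂ`, the function
`(x,t,μ) ↦ L^{x,t,μ}(γ)` is lower semicontinuous on `[0,1] × [0,1] × (0,1]`, hence Borel
measurable and (Lebesgue) integrable there. -/
theorem Lfn_lowerSemicontinuousOn
    {X : Type*} [MetricSpace X] [CompactSpace X] [ConnectedSpace X] [LocallyConnectedSpace X]
    (γ : X → ℂ) (hγ : Continuous γ) :
    LowerSemicontinuousOn (fun P : ℝ × ℝ × ℝ => Lfn γ P.1 P.2.1 P.2.2)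
      (Icc (0:ℝ) 1 ×ˢ Icc (0:ℝ) 1 ×ˢ Ioc (0:ℝ) 1) ∧
    IntegrableOn (fun P : ℝ × ℝ × ℝ => Lfn γ P.1 P.2.1 P.2.2)
      (Icc (0:ℝ) 1 ×ˢ Icc (0:ℝ) 1 ×ˢ Ioc (0:ℝ) 1) volume :=
  Lfn_lowerSemicontinuousOn_aux γ hγ
end
end

section
/- Let γ : X → ℂ be a generalized path and let Φ : ℂ → ℂ be an isometry of the plane. Then len(Φ ∘ γ) = len(γ). -/
open Set MeasureTheory

noncomputable section

/-! ### Auxiliary material for the proof -/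

namespace LenIsomAux

open Complex

local notation "π" => Real.pi
local notation "conj'" => starRingEnd ℂ

/-- The key real-valued coordinate: `qq t z = Im (z · e^{-tπi})`. -/
def qq (t : ℝ) (z : ℂ) : ℝ := (z * Complex.exp (-((t : ℂ) * (π : ℂ) * Complex.I))).im

lemma exp_neg_pi_I : Complex.exp (-((π : ℂ) * Complex.I)) = -1 := by
  rw [Complex.exp_neg, Complex.exp_pi_mul_I]
  norm_num

/-- Membership in a strip, for `μ > 0`. -/
lemma mem_Strip {μ : ℝ} (hμ : 0 < μ) (x t : ℝ) (j : ℤ) (z : ℂ) :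
    z ∈ Strip x t μ j ↔
      ((j : ℝ) ≤ qq t z / μ - x ∧ qq t z / μ - x ≤ (j : ℝ) + 1) := by
  have hμ' : (μ : ℂ) ≠ 0 := by exact_mod_cast hμ.ne'
  have hee : Complex.exp ((t : ℂ) * (π : ℂ) * Complex.I) *
      Complex.exp (-((t : ℂ) * (π : ℂ) * Complex.I)) = 1 := by
    rw [← Complex.exp_add, add_neg_cancel, Complex.exp_zero]
  constructor
  · rintro ⟨w, hw, rfl⟩
    have key : ((μ : ℂ) * Complex.exp ((t : ℂ) * (π : ℂ) * Complex.I) * (w + (x : ℂ) * Complex.I))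
        * Complex.exp (-((t : ℂ) * (π : ℂ) * Complex.I)) = (μ : ℂ) * (w + (x : ℂ) * Complex.I) := by
      calc ((μ : ℂ) * Complex.exp ((t : ℂ) * (π : ℂ) * Complex.I) * (w + (x : ℂ) * Complex.I))
            * Complex.exp (-((t : ℂ) * (π : ℂ) * Complex.I))
          = (μ : ℂ) * (w + (x : ℂ) * Complex.I) *
            (Complex.exp ((t : ℂ) * (π : ℂ) * Complex.I) *
              Complex.exp (-((t : ℂ) * (π : ℂ) * Complex.I))) := by ring
        _ = (μ : ℂ) * (w + (x : ℂ) * Complex.I) := by rw [hee, mul_one]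
    have him : qq t ((μ : ℂ) * Complex.exp ((t : ℂ) * (π : ℂ) * Complex.I)
        * (w + (x : ℂ) * Complex.I)) = μ * (w.im + x) := by
      unfold qq
      rw [key]
      simp [Complex.mul_im, Complex.add_im, Complex.add_re]
    rw [him]
    have : μ * (w.im + x) / μ - x = w.im := by field_simp; ring
    rw [this]
    exact hw
  · rintro ⟨h1, h2⟩
    refine ⟨z * Complex.exp (-((t : ℂ) * (π : ℂ) * Complex.I)) / μ - (x : ℂ) * Complex.I, ?_, ?_⟩
    · constructor
      all_goals {
        have him2 : (z * Complex.exp (-((t : ℂ) * (π : ℂ) * Complex.I)) / (μ:ℂ)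
            - (x : ℂ) * Complex.I).im = qq t z / μ - x := by
          unfold qq
          rw [Complex.sub_im, Complex.div_ofReal_im]
          simp
        rw [him2]
        assumption }
    · have key2 : (μ:ℂ) * Complex.exp ((t : ℂ) * (π : ℂ) * Complex.I) *
          (z * Complex.exp (-((t : ℂ) * (π : ℂ) * Complex.I)) / (μ:ℂ)
            - (x : ℂ) * Complex.I + (x : ℂ) * Complex.I)
          = z * (Complex.exp ((t : ℂ) * (π : ℂ) * Complex.I) *
              Complex.exp (-((t : ℂ) * (π : ℂ) * Complex.I))) * ((μ:ℂ) / (μ:ℂ)) := by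
        ring
      show (μ:ℂ) * Complex.exp ((t : ℂ) * (π : ℂ) * Complex.I) *
          (z * Complex.exp (-((t : ℂ) * (π : ℂ) * Complex.I)) / (μ:ℂ)
            - (x : ℂ) * Complex.I + (x : ℂ) * Complex.I) = z
      rw [key2, hee, div_self hμ', mul_one, mul_one]


/-! #### The unit-modulus exponential `EE r = e^{ir}` -/

/-- `EE r = e^{ir}`. -/
def EE (r : ℝ) : ℂ := Complex.exp ((r : ℂ) * Complex.I)

lemma EE_add (r₁ r₂ : ℝ) : EE (r₁ + r₂) = EE r₁ * EE r₂ := by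
  unfold EE
  rw [← Complex.exp_add]
  congr 1
  push_cast
  ring

lemma EE_pi : EE π = -1 := Complex.exp_pi_mul_I

lemma conj_EE (r : ℝ) : conj' (EE r) = EE (-r) := by
  unfold EE
  rw [← Complex.exp_conj]
  congr 1
  simp

lemma EE_zero : EE 0 = 1 := by
  unfold EE
  simp

lemma EE_neg_pi : EE (-π) = -1 := by
  have h : EE π * EE (-π) = 1 := by
    rw [← EE_add, add_neg_cancel, EE_zero]
  rw [EE_pi] at h
  linear_combination -h

lemma qq_eq (t : ℝ) (z : ℂ) : qq t z = (z * EE (-(t * π))).im := by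
  unfold qq EE
  have h : -((t : ℂ) * (π : ℂ) * Complex.I) = ((-(t * π) : ℝ) : ℂ) * Complex.I := by
    push_cast
    ring
  rw [h]

lemma pp_eq (t : ℝ) (z : ℂ) : projPerp t z = (z * EE (-((t + 1/2) * π))).re := by
  unfold projPerp EE
  have h : -(((t : ℂ) + 1 / 2) * (π : ℂ) * Complex.I)
      = ((-((t + 1/2) * π) : ℝ) : ℂ) * Complex.I := by
    push_cast
    ring
  rw [h]

/-! #### Transformation identities for `qq` and `projPerp` -/

lemma qq_t_add_one (t : ℝ) (z : ℂ) : qq (t + 1) z = -(qq t z) := by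
  rw [qq_eq, qq_eq, show (-((t + 1) * π) : ℝ) = -(t * π) + -π from by ring, EE_add, EE_neg_pi,
    show z * (EE (-(t * π)) * -1) = -(z * EE (-(t * π))) from by ring, Complex.neg_im]

lemma qq_rot (s t : ℝ) (c z : ℂ) :
    qq t (EE (s * π) * z + c) = qq (t - s) z + qq t c := by
  rw [qq_eq, qq_eq, qq_eq, add_mul, Complex.add_im]
  congr 2
  rw [show (-((t - s) * π) : ℝ) = s * π + -(t * π) from by ring, EE_add]
  ring

lemma qq_conj (s t : ℝ) (c z : ℂ) :
    qq t (EE (s * π) * conj' z + c) = -(qq (s - t) z) + qq t c := by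
  rw [qq_eq, qq_eq, qq_eq, add_mul, Complex.add_im]
  have h : EE (s * π) * conj' z * EE (-(t * π)) = conj' (z * EE (-((s - t) * π))) := by
    rw [map_mul, conj_EE, neg_neg,
      show ((s - t) * π : ℝ) = s * π + -(t * π) from by ring, EE_add]
    ring
  rw [h, Complex.conj_im]

lemma pp_t_add_one (t : ℝ) (z : ℂ) : projPerp (t + 1) z = -(projPerp t z) := by
  rw [pp_eq, pp_eq, show (-((t + 1 + 1/2) * π) : ℝ) = -((t + 1/2) * π) + -π from by ring,
    EE_add, EE_neg_pi,
    show z * (EE (-((t + 1/2) * π)) * -1) = -(z * EE (-((t + 1/2) * π))) from by ring,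
    Complex.neg_re]

lemma pp_rot (s t : ℝ) (c z : ℂ) :
    projPerp t (EE (s * π) * z + c) = projPerp (t - s) z + projPerp t c := by
  rw [pp_eq, pp_eq, pp_eq, add_mul, Complex.add_re]
  congr 2
  rw [show (-((t - s + 1/2) * π) : ℝ) = s * π + -((t + 1/2) * π) from by ring, EE_add]
  ring

lemma pp_conj (s t : ℝ) (c z : ℂ) :
    projPerp t (EE (s * π) * conj' z + c) = -(projPerp (s - t) z) + projPerp t c := by
  rw [pp_eq, pp_eq, pp_eq, add_mul, Complex.add_re]
  have h : EE (s * π) * conj' z * EE (-((t + 1/2) * π))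
      = conj' (-(z * EE (-((s - t + 1/2) * π)))) := by
    rw [map_neg, map_mul, conj_EE, neg_neg,
      show ((s - t + 1/2) * π : ℝ) = (s * π + -((t + 1/2) * π)) + π from by ring,
      EE_add, EE_add, EE_pi]
    ring
  rw [h, Complex.conj_re, Complex.neg_re]

/-! #### Strip identities -/

lemma Strip_x_add_one {μ : ℝ} (hμ : 0 < μ) (x t : ℝ) (j : ℤ) :
    Strip (x + 1) t μ j = Strip x t μ (j + 1) := by
  ext z
  rw [mem_Strip hμ, mem_Strip hμ]
  push_cast
  constructor <;> intro h <;> exact ⟨by linarith [h.1], by linarith [h.2]⟩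

lemma Strip_t_add_one {μ : ℝ} (hμ : 0 < μ) (x t : ℝ) (j : ℤ) :
    Strip x (t + 1) μ j = Strip (-x) t μ (-j - 1) := by
  ext z
  rw [mem_Strip hμ, mem_Strip hμ, qq_t_add_one]
  rw [show -(qq t z) / μ = -(qq t z / μ) from by ring]
  push_cast
  constructor <;> intro h <;> exact ⟨by linarith [h.1, h.2], by linarith [h.1, h.2]⟩

lemma Strip_rot {μ : ℝ} (hμ : 0 < μ) (s : ℝ) (c : ℂ) (x t : ℝ) (j : ℤ) :
    (fun z => EE (s * π) * z + c) ⁻¹' Strip x t μ j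
      = Strip (x - qq t c / μ) (t - s) μ j := by
  ext z
  simp only [Set.mem_preimage]
  rw [mem_Strip hμ, mem_Strip hμ, qq_rot]
  rw [show (qq (t - s) z + qq t c) / μ - x = qq (t - s) z / μ - (x - qq t c / μ) from by
    rw [add_div]; ring]

lemma Strip_conj {μ : ℝ} (hμ : 0 < μ) (s : ℝ) (c : ℂ) (x t : ℝ) (j : ℤ) :
    (fun z => EE (s * π) * conj' z + c) ⁻¹' Strip x t μ j
      = Strip (qq t c / μ - x) (s - t) μ (-j - 1) := by
  ext z
  simp only [Set.mem_preimage]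
  rw [mem_Strip hμ, mem_Strip hμ, qq_conj]
  rw [show (-(qq (s - t) z) + qq t c) / μ - x
      = -(qq (s - t) z / μ - (qq t c / μ - x)) from by rw [add_div, neg_div]; ring]
  push_cast
  constructor <;> intro h <;> exact ⟨by linarith [h.1, h.2], by linarith [h.1, h.2]⟩

/-! #### The transfer lemma for `Lfn` -/

lemma Lfn_transfer {X : Type*} [TopologicalSpace X] (γ : X → ℂ) (Φ : ℂ → ℂ)
    (x t x' t' μ ε d : ℝ) (hε : ε = 1 ∨ ε = -1) (σ : ℤ ≃ ℤ)
    (hstrip : ∀ j : ℤ, Φ ⁻¹' Strip x t μ j = Strip x' t' μ (σ j))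
    (hproj : ∀ z, projPerp t (Φ z) = ε * projPerp t' z + d) :
    Lfn (Φ ∘ γ) x t μ = Lfn γ x' t' μ := by
  have hiso : Isometry (fun r : ℝ => ε * r + d) := by
    apply Isometry.of_dist_eq
    intro r₁ r₂
    rw [Real.dist_eq, Real.dist_eq,
      show ε * r₁ + d - (ε * r₂ + d) = ε * (r₁ - r₂) from by ring, abs_mul]
    rcases hε with rfl | rfl <;> simp
  have hinj : Function.Injective (fun r : ℝ => ε * r + d) := hiso.injective
  have himg : ∀ A : Set ℂ,
      projPerp t '' (Φ '' A) = (fun r : ℝ => ε * r + d) '' (projPerp t' '' A) := by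
    intro A
    rw [← Set.image_comp, ← Set.image_comp]
    exact Set.image_congr' (fun z => hproj z)
  have hsc : stripComponents (Φ ∘ γ) x t μ = stripComponents γ x' t' μ := by
    ext C
    constructor
    · rintro ⟨j, p, hp, rfl⟩
      refine ⟨σ j, p, ?_, ?_⟩
      · rw [Set.preimage_comp, hstrip] at hp
        exact hp
      · rw [Set.preimage_comp, hstrip]
    · rintro ⟨j, p, hp, rfl⟩
      refine ⟨σ.symm j, p, ?_, ?_⟩
      · rw [Set.preimage_comp, hstrip, Equiv.apply_symm_apply]
        exact hp
      · rw [Set.preimage_comp, hstrip, Equiv.apply_symm_apply]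
  have hnt : ∀ C : Set X, (projPerp t '' ((Φ ∘ γ) '' C)).Nontrivial
      ↔ (projPerp t' '' (γ '' C)).Nontrivial := by
    intro C
    rw [Set.image_comp Φ γ, himg]
    constructor
    · rintro ⟨u, hu, w, hw, huw⟩
      obtain ⟨p, hp, rfl⟩ := hu
      obtain ⟨q, hq, rfl⟩ := hw
      exact ⟨p, hp, q, hq, fun h => huw (by rw [h])⟩
    · rintro ⟨p, hp, q, hq, hpq⟩
      exact ⟨_, Set.mem_image_of_mem _ hp, _, Set.mem_image_of_mem _ hq,
        fun h => hpq (hinj h)⟩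
  have hnd : ndComponents (Φ ∘ γ) x t μ = ndComponents γ x' t' μ := by
    ext C
    unfold ndComponents
    rw [Set.mem_setOf_eq, Set.mem_setOf_eq, hsc, hnt C]
  have hterm : ∀ C : Set X, normT t ((Φ ∘ γ) '' C) = normT t' (γ '' C) := by
    intro C
    unfold normT
    rw [Set.image_comp Φ γ, himg, hiso.diam_image]
  unfold Lfn
  congr 1
  ext r
  simp only [Set.mem_setOf_eq]
  constructor <;> rintro ⟨N, e, he, hmem, rfl⟩
  · exact ⟨N, e, he, fun n => hnd ▸ hmem n, Finset.sum_congr rfl fun n _ => by rw [hterm]⟩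
  · exact ⟨N, e, he, fun n => hnd.symm ▸ hmem n, Finset.sum_congr rfl fun n _ => by rw [hterm]⟩

/-- The equivalence `j ↦ j + 1` of `ℤ`. -/
def addOneEquiv : ℤ ≃ ℤ where
  toFun j := j + 1
  invFun j := j - 1
  left_inv j := by ring
  right_inv j := by ring

/-- The equivalence `j ↦ -j - 1` of `ℤ`. -/
def negEquiv : ℤ ≃ ℤ where
  toFun j := -j - 1
  invFun j := -j - 1
  left_inv j := by ring
  right_inv j := by ring

/-! #### Classification of plane isometries -/

lemma isometry_classification (Φ : ℂ → ℂ) (hΦ : Isometry Φ) :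
    ∃ a c : ℂ, ‖a‖ = 1 ∧
      ((∀ z, Φ z = a * z + c) ∨ (∀ z, Φ z = a * conj' z + c)) := by
  have hdist : ∀ z w, ‖Φ z - Φ w‖ = ‖z - w‖ := by
    intro z w
    have h := hΦ.dist_eq z w
    rwa [Complex.dist_eq, Complex.dist_eq] at h
  obtain ⟨ψ, hψdef⟩ : ∃ ψ : ℂ → ℂ, ψ = fun z => Φ z - Φ 0 := ⟨_, rfl⟩
  have hdψ : ∀ z w, ‖ψ z - ψ w‖ = ‖z - w‖ := by
    intro z w
    rw [hψdef]
    dsimp only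
    rw [show Φ z - Φ 0 - (Φ w - Φ 0) = Φ z - Φ w from by ring]
    exact hdist z w
  have habs : ∀ z, ‖ψ z‖ = ‖z‖ := by
    intro z
    have h := hdψ z 0
    rw [hψdef] at h
    dsimp only at h
    rw [show Φ z - Φ 0 - (Φ 0 - Φ 0) = Φ z - Φ 0 from by ring, sub_zero] at h
    rw [hψdef]
    exact h
  have hinner : ∀ z w, (ψ z * conj' (ψ w)).re = (z * conj' w).re := by
    intro z w
    have h1 : Complex.normSq (ψ z - ψ w) = Complex.normSq (z - w) := by
      rw [← Complex.sq_norm, ← Complex.sq_norm, hdψ]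
    have h2 : Complex.normSq (ψ z) = Complex.normSq z := by
      rw [← Complex.sq_norm, ← Complex.sq_norm, habs]
    have h3 : Complex.normSq (ψ w) = Complex.normSq w := by
      rw [← Complex.sq_norm, ← Complex.sq_norm, habs]
    rw [Complex.normSq_sub, Complex.normSq_sub, h2, h3] at h1
    linarith
  have ha : ‖ψ 1‖ = 1 := by simpa using habs 1
  have hb : ‖ψ Complex.I‖ = 1 := by simpa using habs Complex.I
  set a := ψ 1 with hadef
  set b := ψ Complex.I with hbdef
  have hcc : conj' a * a = 1 := by
    rw [mul_comm, Complex.mul_conj, Complex.normSq_eq_norm_sq, ha]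
    norm_num
  have hba : (b * conj' a).re = 0 := by
    have h := hinner Complex.I 1
    simpa using h
  have hw2 : (b * conj' a).im = 1 ∨ (b * conj' a).im = -1 := by
    have habs' : ‖b * conj' a‖ = 1 := by
      rw [norm_mul, Complex.norm_conj, ha, hb]
      norm_num
    have h2 : (b * conj' a).re ^ 2 + (b * conj' a).im ^ 2 = 1 := by
      have hx := Complex.sq_norm (b * conj' a)
      rw [habs', Complex.normSq_apply] at hx
      nlinarith [hx]
    rw [hba] at h2
    have h3 : ((b * conj' a).im - 1) * ((b * conj' a).im + 1) = 0 := by nlinarith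
    rcases mul_eq_zero.mp h3 with h | h
    · left; linarith
    · right; linarith
  have key : ∀ z, (ψ z * conj' a).re = z.re ∧ (ψ z * conj' b).re = z.im := by
    intro z
    constructor
    · have h := hinner z 1
      simpa using h
    · have h := hinner z Complex.I
      have hr : (z * conj' Complex.I).re = z.im := by
        simp [Complex.conj_I]
      rw [hr] at h
      exact h
  have hbval : b = Complex.I * a ∨ b = -(Complex.I * a) := by
    have hsplit : b * conj' a = Complex.I ∨ b * conj' a = -Complex.I := by
      rcases hw2 with h | h
      · left; apply Complex.ext <;> simp [hba, h]
      · right; apply Complex.ext <;> simp [hba, h]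
    rcases hsplit with h | h
    · left
      calc b = b * (conj' a * a) := by rw [hcc, mul_one]
        _ = b * conj' a * a := by ring
        _ = Complex.I * a := by rw [h]
    · right
      calc b = b * (conj' a * a) := by rw [hcc, mul_one]
        _ = b * conj' a * a := by ring
        _ = -(Complex.I * a) := by rw [h]; ring
  have hψz : ∀ z, Φ z = ψ z + Φ 0 := by
    intro z
    rw [hψdef]
    dsimp only
    ring
  refine ⟨a, Φ 0, ha, ?_⟩
  rcases hbval with hb' | hb'
  · left
    intro z
    have h1 : (ψ z * conj' a).re = z.re := (key z).1
    have h2 : (ψ z * conj' a).im = z.im := by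
      have h := (key z).2
      rw [hb', show conj' (Complex.I * a) = -Complex.I * conj' a from by
          rw [map_mul, Complex.conj_I],
        show ψ z * (-Complex.I * conj' a) = -Complex.I * (ψ z * conj' a) from by ring,
        show (-Complex.I * (ψ z * conj' a)).re = (ψ z * conj' a).im from by
          simp [Complex.mul_re]] at h
      exact h
    have h3 : ψ z * conj' a = z := Complex.ext h1 h2
    have h4 : ψ z = a * z := by
      calc ψ z = ψ z * (conj' a * a) := by rw [hcc, mul_one]
        _ = ψ z * conj' a * a := by ring
        _ = z * a := by rw [h3]
        _ = a * z := mul_comm _ _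
    rw [hψz z, h4]
  · right
    intro z
    have h1 : (ψ z * conj' a).re = z.re := (key z).1
    have h2 : (ψ z * conj' a).im = -z.im := by
      have h := (key z).2
      rw [hb', show conj' (-(Complex.I * a)) = Complex.I * conj' a from by
          rw [map_neg, map_mul, Complex.conj_I, neg_mul, neg_neg],
        show ψ z * (Complex.I * conj' a) = Complex.I * (ψ z * conj' a) from by ring,
        show (Complex.I * (ψ z * conj' a)).re = -(ψ z * conj' a).im from by
          simp [Complex.mul_re]] at h
      linarith
    have h3 : ψ z * conj' a = conj' z := by
      apply Complex.ext
      · rw [h1, Complex.conj_re]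
      · rw [h2, Complex.conj_im]
    have h4 : ψ z = a * conj' z := by
      calc ψ z = ψ z * (conj' a * a) := by rw [hcc, mul_one]
        _ = ψ z * conj' a * a := by ring
        _ = conj' z * a := by rw [h3]
        _ = a * conj' z := mul_comm _ _
    rw [hψz z, h4]

end LenIsomAux

/-- **Proposition 3.1(iii).** If `γ : X → ℂ` is a generalized path and `Φ : ℂ → ℂ` is an
isometry of the plane, then `len(Φ ∘ γ) = len(γ)`. -/
theorem len_comp_isometry
    {X : Type*} [MetricSpace X] [CompactSpace X] [ConnectedSpace X] [LocallyConnectedSpace X]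
    (γ : X → ℂ) (hγ : Continuous γ) (Φ : ℂ → ℂ) (hΦ : Isometry Φ) :
    len (Φ ∘ γ) = len γ := by
  classical
  obtain ⟨a, c, ha, hform⟩ := LenIsomAux.isometry_classification Φ hΦ
  obtain ⟨s, hs⟩ : ∃ s : ℝ, LenIsomAux.EE (s * Real.pi) = a := by
    refine ⟨a.arg / Real.pi, ?_⟩
    unfold LenIsomAux.EE
    rw [show ((a.arg / Real.pi * Real.pi : ℝ) : ℂ) = (a.arg : ℂ) from by
      rw [div_mul_cancel₀ _ Real.pi_ne_zero]]
    have h := Complex.norm_mul_exp_arg_mul_I a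
    rwa [ha, Complex.ofReal_one, one_mul] at h
  unfold len
  apply intervalIntegral.integral_congr_ae
  refine ae_of_all _ fun μ hμmem => ?_
  rw [Set.uIoc_of_le zero_le_one] at hμmem
  have hμ : (0:ℝ) < μ := hμmem.1
  -- periodicity of `Lfn γ` in `x`
  have hxper : ∀ τ : ℝ, Function.Periodic (fun x => Lfn γ x τ μ) 1 := by
    intro τ x
    have h := LenIsomAux.Lfn_transfer γ id (x + 1) τ x τ μ 1 0 (Or.inl rfl)
      LenIsomAux.addOneEquiv
      (fun j => by
        rw [Set.preimage_id]
        exact LenIsomAux.Strip_x_add_one hμ x τ j)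
      (fun z => by simp)
    simpa using h
  -- behaviour of `Lfn γ` under `t ↦ t + 1`
  have ht1 : ∀ τ x : ℝ, Lfn γ x (τ + 1) μ = Lfn γ (-x) τ μ := by
    intro τ x
    have h := LenIsomAux.Lfn_transfer γ id x (τ + 1) (-x) τ μ (-1) 0 (Or.inr rfl)
      LenIsomAux.negEquiv
      (fun j => by
        rw [Set.preimage_id]
        exact LenIsomAux.Strip_t_add_one hμ x τ j)
      (fun z => by
        show projPerp (τ + 1) z = -1 * projPerp τ z + 0
        rw [LenIsomAux.pp_t_add_one]
        ring)
    simpa using h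
  -- periodicity of the inner integral in `t`
  have hFper : Function.Periodic (fun τ => ∫ x in (0:ℝ)..1, Lfn γ x τ μ) 1 := by
    intro τ
    dsimp only
    have e1 : (∫ x in (0:ℝ)..1, Lfn γ x (τ + 1) μ) = ∫ x in (0:ℝ)..1, Lfn γ (-x) τ μ :=
      intervalIntegral.integral_congr fun x _ => ht1 τ x
    rw [e1, intervalIntegral.integral_comp_neg (fun x => Lfn γ x τ μ)]
    have h := (hxper τ).intervalIntegral_add_eq (-1) 0
    rw [show (-1:ℝ) + 1 = 0 from by ring, zero_add] at h
    rw [neg_zero]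
    exact h
  rcases hform with hrot | hconj
  · -- the rotation case `Φ z = a z + c`
    have hΦeq : Φ = fun z => LenIsomAux.EE (s * Real.pi) * z + c := by
      funext z
      rw [hrot z, hs]
    rw [hΦeq]
    have hinner : ∀ τ : ℝ, (∫ x in (0:ℝ)..1,
        Lfn ((fun z => LenIsomAux.EE (s * Real.pi) * z + c) ∘ γ) x τ μ)
        = (fun τ' => ∫ x in (0:ℝ)..1, Lfn γ x τ' μ) (τ - s) := by
      intro τ
      dsimp only
      have h1 : ∀ x : ℝ, Lfn ((fun z => LenIsomAux.EE (s * Real.pi) * z + c) ∘ γ) x τ μ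
          = Lfn γ (x - LenIsomAux.qq τ c / μ) (τ - s) μ := fun x =>
        LenIsomAux.Lfn_transfer γ _ x τ (x - LenIsomAux.qq τ c / μ) (τ - s) μ 1
          (projPerp τ c) (Or.inl rfl) (Equiv.refl ℤ)
          (fun j => LenIsomAux.Strip_rot hμ s c x τ j)
          (fun z => by
            show projPerp τ (LenIsomAux.EE (s * Real.pi) * z + c)
              = 1 * projPerp (τ - s) z + projPerp τ c
            rw [LenIsomAux.pp_rot]
            ring)
      rw [intervalIntegral.integral_congr fun x _ => h1 x,
        intervalIntegral.integral_comp_sub_right (fun x => Lfn γ x (τ - s) μ)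
          (LenIsomAux.qq τ c / μ)]
      have h2 := (hxper (τ - s)).intervalIntegral_add_eq (0 - LenIsomAux.qq τ c / μ) 0
      rw [show (0:ℝ) - LenIsomAux.qq τ c / μ + 1 = 1 - LenIsomAux.qq τ c / μ from by ring,
        zero_add] at h2
      exact h2
    rw [intervalIntegral.integral_congr fun τ _ => hinner τ,
      intervalIntegral.integral_comp_sub_right (fun τ => ∫ x in (0:ℝ)..1, Lfn γ x τ μ) s]
    have h3 := hFper.intervalIntegral_add_eq (0 - s) 0
    rw [show (0:ℝ) - s + 1 = 1 - s from by ring, zero_add] at h3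
    exact h3
  · -- the reflection case `Φ z = a (conj z) + c`
    have hΦeq : Φ = fun z => LenIsomAux.EE (s * Real.pi) * (starRingEnd ℂ) z + c := by
      funext z
      rw [hconj z, hs]
    rw [hΦeq]
    have hinner : ∀ τ : ℝ, (∫ x in (0:ℝ)..1,
        Lfn ((fun z => LenIsomAux.EE (s * Real.pi) * (starRingEnd ℂ) z + c) ∘ γ) x τ μ)
        = (fun τ' => ∫ x in (0:ℝ)..1, Lfn γ x τ' μ) (s - τ) := by
      intro τ
      dsimp only
      have h1 : ∀ x : ℝ,
          Lfn ((fun z => LenIsomAux.EE (s * Real.pi) * (starRingEnd ℂ) z + c) ∘ γ) x τ μ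
          = Lfn γ (LenIsomAux.qq τ c / μ - x) (s - τ) μ := fun x =>
        LenIsomAux.Lfn_transfer γ _ x τ (LenIsomAux.qq τ c / μ - x) (s - τ) μ (-1)
          (projPerp τ c) (Or.inr rfl) LenIsomAux.negEquiv
          (fun j => LenIsomAux.Strip_conj hμ s c x τ j)
          (fun z => by
            show projPerp τ (LenIsomAux.EE (s * Real.pi) * (starRingEnd ℂ) z + c)
              = -1 * projPerp (s - τ) z + projPerp τ c
            rw [LenIsomAux.pp_conj]
            ring)
      rw [intervalIntegral.integral_congr fun x _ => h1 x,
        intervalIntegral.integral_comp_sub_left (fun x => Lfn γ x (s - τ) μ)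
          (LenIsomAux.qq τ c / μ)]
      have h2 := (hxper (s - τ)).intervalIntegral_add_eq (LenIsomAux.qq τ c / μ - 1) 0
      rw [show LenIsomAux.qq τ c / μ - 1 + 1 = LenIsomAux.qq τ c / μ from by ring,
        zero_add] at h2
      rw [sub_zero]
      exact h2
    rw [intervalIntegral.integral_congr fun τ _ => hinner τ,
      intervalIntegral.integral_comp_sub_left (fun τ => ∫ x in (0:ℝ)..1, Lfn γ x τ μ) s]
    have h3 := hFper.intervalIntegral_add_eq (s - 1) 0
    rw [show s - 1 + 1 = s from by ring, zero_add] at h3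
    rw [sub_zero]
    exact h3
end
end

section
/- Let γ : X → ℂ be a generalized path, let {q_k}_{k=0}^∞ be a countable dense subset of X, and for k ≠ l and j ∈ ℤ let B_{kl}^j be the set of all (x,t,μ) ∈ [0,1] × [0,1] × (0,1] such that there exists a subcontinuum C ⊆ γ⁻¹(S^{x,t,μ}_j) with q_k, q_l ∈ C, and every such subcontinuum C satisfies γ(C) ∩ ∂S^{x,t,μ}_j ≠ ∅. Then the set B = ⋃_{k≠l, j∈ℤ} B_{kl}^j has Lebesgue measure zero. -/
open Set MeasureTheory

noncomputable section

namespace Claim341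

/-- `uu t z = Im (z * e^{-tπi})`. -/
def uu (t : ℝ) (z : ℂ) : ℝ := (z * Complex.exp (-((t : ℂ) * (Real.pi : ℂ) * Complex.I))).im

lemma continuous_uu : Continuous fun p : ℝ × ℂ => uu p.1 p.2 := by
  unfold uu
  apply Complex.continuous_im.comp
  exact continuous_snd.mul <| Complex.continuous_exp.comp <| by continuity

lemma uu_image (t : ℝ) (c : ℂ) :
    uu t (Complex.exp ((t : ℂ) * (Real.pi : ℂ) * Complex.I) * c) = c.im := by
  unfold uu
  rw [Complex.exp_neg, mul_comm (Complex.exp _) c, mul_assoc,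
    mul_inv_cancel₀ (Complex.exp_ne_zero _), mul_one]

lemma mem_Strip_iff {x t μ : ℝ} (hμ : 0 < μ) (j : ℤ) (z : ℂ) :
    z ∈ Strip x t μ j ↔
      uu t z ∈ Icc (μ * ((j : ℝ) + x)) (μ * ((j : ℝ) + x) + μ) := by
  have hμ' : (μ : ℂ) ≠ 0 := by exact_mod_cast hμ.ne'
  constructor
  · rintro ⟨w, hw, rfl⟩
    have h1 : (μ : ℂ) * Complex.exp ((t : ℂ) * (Real.pi : ℂ) * Complex.I) *
        (w + (x : ℂ) * Complex.I)
        = Complex.exp ((t : ℂ) * (Real.pi : ℂ) * Complex.I) * ((μ : ℂ) * (w + (x : ℂ) * Complex.I)) := by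
      ring
    show uu t ((μ : ℂ) * Complex.exp ((t : ℂ) * (Real.pi : ℂ) * Complex.I) *
        (w + (x : ℂ) * Complex.I)) ∈ _
    rw [h1, uu_image]
    have h2 : (((μ : ℂ)) * (w + (x : ℂ) * Complex.I)).im = μ * (w.im + x) := by
      simp [Complex.mul_im, Complex.add_im, Complex.add_re]
    rw [h2]
    obtain ⟨hw1, hw2⟩ := hw
    constructor <;> nlinarith
  · rintro ⟨h1, h2⟩
    refine ⟨((μ⁻¹ : ℝ) : ℂ) * (z * Complex.exp (-((t : ℂ) * (Real.pi : ℂ) * Complex.I)))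
      - (x : ℂ) * Complex.I, ?_, ?_⟩
    · have him : (((μ⁻¹ : ℝ) : ℂ) * (z * Complex.exp (-((t : ℂ) * (Real.pi : ℂ) * Complex.I)))
          - (x : ℂ) * Complex.I).im = μ⁻¹ * uu t z - x := by
        simp [Complex.sub_im, Complex.mul_im, uu]
      show ((j:ℝ) ≤ _ ∧ _)
      rw [him]
      have k1 : (j : ℝ) + x ≤ μ⁻¹ * uu t z := by
        have h := mul_le_mul_of_nonneg_left h1 (inv_pos.mpr hμ).le
        rwa [← mul_assoc, inv_mul_cancel₀ hμ.ne', one_mul] at h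
      have k2 : μ⁻¹ * uu t z ≤ (j : ℝ) + x + 1 := by
        have h := mul_le_mul_of_nonneg_left h2 (inv_pos.mpr hμ).le
        rwa [mul_add, ← mul_assoc, inv_mul_cancel₀ hμ.ne', one_mul] at h
      constructor <;> linarith
    · have he : Complex.exp ((t : ℂ) * (Real.pi : ℂ) * Complex.I) *
          Complex.exp (-((t : ℂ) * (Real.pi : ℂ) * Complex.I)) = 1 := by
        rw [← Complex.exp_add, add_neg_cancel, Complex.exp_zero]
      show (μ : ℂ) * Complex.exp ((t : ℂ) * (Real.pi : ℂ) * Complex.I) *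
        ((((μ⁻¹ : ℝ) : ℂ) * (z * Complex.exp (-((t : ℂ) * (Real.pi : ℂ) * Complex.I)))
          - (x : ℂ) * Complex.I) + (x : ℂ) * Complex.I) = z
      rw [sub_add_cancel, Complex.ofReal_inv]
      calc (μ : ℂ) * Complex.exp ((t : ℂ) * (Real.pi : ℂ) * Complex.I) *
            (((μ : ℂ))⁻¹ * (z * Complex.exp (-((t : ℂ) * (Real.pi : ℂ) * Complex.I))))
          = z * ((μ : ℂ) * (μ : ℂ)⁻¹) * (Complex.exp ((t : ℂ) * (Real.pi : ℂ) * Complex.I) *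
            Complex.exp (-((t : ℂ) * (Real.pi : ℂ) * Complex.I))) := by ring
        _ = z := by rw [mul_inv_cancel₀ hμ', he, mul_one, mul_one]

section Topology

variable {X : Type*} [MetricSpace X] [CompactSpace X]

/-- The preimage of the closed band `u_t ∈ [s,b]`. -/
def Kset (γ : X → ℂ) (t s b : ℝ) : Set X := (fun p => uu t (γ p)) ⁻¹' Icc s b

/-- `a` and `c` lie in a common subcontinuum of the band preimage. -/
def PP (γ : X → ℂ) (a c : X) (t s b : ℝ) : Prop :=
  c ∈ connectedComponentIn (Kset γ t s b) a

variable {γ : X → ℂ} (hγ : Continuous γ) {a c : X}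
include hγ
set_option linter.unusedSectionVars false

lemma continuous_uuγ (t : ℝ) : Continuous fun p => uu t (γ p) :=
  continuous_uu.comp (continuous_const.prodMk hγ)

lemma Kset_closed (t s b : ℝ) : IsClosed (Kset γ t s b) :=
  isClosed_Icc.preimage (continuous_uuγ hγ t)

lemma Kset_compact (t s b : ℝ) : IsCompact (Kset γ t s b) :=
  (Kset_closed hγ t s b).isCompact

lemma PP_iff_exists (t s b : ℝ) :
    PP γ a c t s b ↔ ∃ C : Set X, IsCompact C ∧ IsConnected C ∧ C ⊆ Kset γ t s b ∧
      a ∈ C ∧ c ∈ C := by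
  constructor
  · intro h
    have hne : (connectedComponentIn (Kset γ t s b) a).Nonempty := ⟨c, h⟩
    have haK : a ∈ Kset γ t s b := connectedComponentIn_nonempty_iff.mp hne
    refine ⟨connectedComponentIn (Kset γ t s b) a, ?_, ?_, connectedComponentIn_subset _ _, 
      mem_connectedComponentIn haK, h⟩
    · rw [connectedComponentIn_eq_image haK]
      haveI : CompactSpace (Kset γ t s b) := isCompact_iff_compactSpace.mp (Kset_compact hγ t s b)
      exact (isClosed_connectedComponent.isCompact).image continuous_subtype_val
    · exact isConnected_connectedComponentIn_iff.mpr haK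
  · rintro ⟨C, -, hCconn, hCsub, haC, hcC⟩
    exact hCconn.isPreconnected.subset_connectedComponentIn haC hCsub hcC

omit hγ in
lemma PP_mono {t s b s' b' : ℝ} (hs : s ≤ s') (hb : b' ≤ b) (h : PP γ a c t s' b') :
    PP γ a c t s b := by
  have : Kset γ t s' b' ⊆ Kset γ t s b := fun p hp => ⟨hs.trans hp.1, hp.2.trans hb⟩
  exact connectedComponentIn_mono a this h

lemma PP_isClosed : IsClosed {w : ℝ × ℝ × ℝ | PP γ a c w.1 w.2.1 w.2.2} := by
  rw [← isSeqClosed_iff_isClosed]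
  intro w wl hw hwl
  have hwl1 : Filter.Tendsto (fun n => (w n).1) Filter.atTop (nhds wl.1) :=
    (continuous_fst.tendsto wl).comp hwl
  have hwl2a : Filter.Tendsto (fun n => (w n).2.1) Filter.atTop (nhds wl.2.1) :=
    ((continuous_fst.comp continuous_snd).tendsto wl).comp hwl
  have hwl2b : Filter.Tendsto (fun n => (w n).2.2) Filter.atTop (nhds wl.2.2) :=
    ((continuous_snd.comp continuous_snd).tendsto wl).comp hwl
  -- key: limits of points in the moving Ksets lie in the limit Kset
  have keyK : ∀ (ψ : ℕ → ℕ), Filter.Tendsto ψ Filter.atTop Filter.atTop →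
      ∀ (p : ℕ → X) (z : X), (∀ n, p n ∈ Kset γ (w (ψ n)).1 (w (ψ n)).2.1 (w (ψ n)).2.2) →
      Filter.Tendsto p Filter.atTop (nhds z) → z ∈ Kset γ wl.1 wl.2.1 wl.2.2 := by
    intro ψ hψ p z hp hpz
    have hu : Filter.Tendsto (fun n => uu (w (ψ n)).1 (γ (p n))) Filter.atTop
        (nhds (uu wl.1 (γ z))) := by
      have : Filter.Tendsto (fun n => ((w (ψ n)).1, γ (p n))) Filter.atTop
          (nhds (wl.1, γ z)) :=
        ((hwl1.comp hψ).prodMk_nhds ((hγ.tendsto z).comp hpz))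
      exact (continuous_uu.tendsto _).comp this
    constructor
    · exact le_of_tendsto_of_tendsto (hwl2a.comp hψ) hu
        (Filter.Eventually.of_forall fun n => (hp n).1)
    · exact le_of_tendsto_of_tendsto hu (hwl2b.comp hψ)
        (Filter.Eventually.of_forall fun n => (hp n).2)
  -- memberships of a and c in all Ksets, and in the limit Kset
  have haKn : ∀ n, a ∈ Kset γ (w n).1 (w n).2.1 (w n).2.2 := fun n =>
    connectedComponentIn_nonempty_iff.mp ⟨c, hw n⟩
  have hcKn : ∀ n, c ∈ Kset γ (w n).1 (w n).2.1 (w n).2.2 := fun n =>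
    connectedComponentIn_subset _ _ (hw n)
  have haK : a ∈ Kset γ wl.1 wl.2.1 wl.2.2 :=
    keyK id Filter.tendsto_id (fun _ => a) a haKn tendsto_const_nhds
  have hcK : c ∈ Kset γ wl.1 wl.2.1 wl.2.2 :=
    keyK id Filter.tendsto_id (fun _ => c) c hcKn tendsto_const_nhds
  by_contra hnot
  -- extract a clopen separation in the limit Kset
  set K := Kset γ wl.1 wl.2.1 wl.2.2 with hK
  haveI : CompactSpace K := isCompact_iff_compactSpace.mp (Kset_compact hγ _ _ _)
  have hcc : (⟨c, hcK⟩ : K) ∉ connectedComponent (⟨a, haK⟩ : K) := by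
    intro hmem
    apply hnot
    show c ∈ connectedComponentIn K a
    rw [connectedComponentIn_eq_image haK]
    exact ⟨⟨c, hcK⟩, hmem, rfl⟩
  rw [connectedComponent_eq_iInter_isClopen, mem_iInter] at hcc
  push_neg at hcc
  obtain ⟨S, hcZ⟩ := hcc
  obtain ⟨Z, hZclopen, haZ⟩ := S
  simp only at hcZ
  -- two disjoint compacts
  have hZcomp : IsCompact ((Subtype.val : K → X) '' Z) :=
    (hZclopen.isClosed.isCompact).image continuous_subtype_val
  have hZccomp : IsCompact ((Subtype.val : K → X) '' Zᶜ) :=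
    ((hZclopen.compl.isClosed).isCompact).image continuous_subtype_val
  have hdisj : Disjoint ((Subtype.val : K → X) '' Z) ((Subtype.val : K → X) '' Zᶜ) :=
    Set.disjoint_image_of_injective Subtype.val_injective disjoint_compl_right
  obtain ⟨U, V, hUopen, hVopen, hZU, hZcV, hUV⟩ :=
    SeparatedNhds.of_isCompact_isCompact hZcomp hZccomp hdisj
  have hKsub : K ⊆ U ∪ V := by
    intro p hp
    by_cases hpz : (⟨p, hp⟩ : K) ∈ Z
    · exact Or.inl (hZU ⟨⟨p, hp⟩, hpz, rfl⟩)
    · exact Or.inr (hZcV ⟨⟨p, hp⟩, hpz, rfl⟩)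
  -- eventually the connecting continua are inside U ∪ V
  set C : ℕ → Set X := fun n => connectedComponentIn (Kset γ (w n).1 (w n).2.1 (w n).2.2) a
    with hC
  have hCK : ∀ n, C n ⊆ Kset γ (w n).1 (w n).2.1 (w n).2.2 := fun n =>
    connectedComponentIn_subset _ _
  have hmain : ∃ n, C n ⊆ U ∪ V := by
    by_contra hcon
    push_neg at hcon
    have : ∀ n, ∃ p, p ∈ C n ∧ p ∉ U ∪ V := by
      intro n
      obtain ⟨p, hp1, hp2⟩ := not_subset.mp (hcon n)
      exact ⟨p, hp1, hp2⟩
    choose p hp1 hp2 using this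
    obtain ⟨z, -, φ, hφ, hz⟩ := isCompact_univ.tendsto_subseq (fun n => mem_univ (p n))
    have hzK : z ∈ K := keyK φ hφ.tendsto_atTop (fun n => p (φ n)) z
      (fun n => hCK (φ n) (hp1 (φ n))) hz
    have hzUV : z ∉ U ∪ V := by
      have hcl : IsClosed ((U ∪ V)ᶜ) := (hUopen.union hVopen).isClosed_compl
      exact hcl.mem_of_tendsto hz (Filter.Eventually.of_forall fun n => hp2 (φ n))
    exact hzUV (hKsub hzK)
  obtain ⟨n, hn⟩ := hmain
  have haCn : a ∈ C n := mem_connectedComponentIn (haKn n)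
  have hcCn : c ∈ C n := hw n
  have haU : a ∈ U := hZU ⟨⟨a, haK⟩, haZ, rfl⟩
  have hcV : c ∈ V := hZcV ⟨⟨c, hcK⟩, hcZ, rfl⟩
  have hCU : C n ⊆ U :=
    (isPreconnected_connectedComponentIn).subset_left_of_subset_union hUopen hVopen hUV hn
      ⟨a, haCn, haU⟩
  exact (hUV.ne_of_mem (hCU hcCn) hcV) rfl

/-- Lower envelope. -/
def FF (γ : X → ℂ) (a c : X) (t s : ℝ) : EReal :=
  ⨅ (b : ℚ) (_ : PP γ a c t s (b : ℝ)), ((b : ℝ) : EReal)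

/-- Right limit of the lower envelope. -/
def GG (γ : X → ℂ) (a c : X) (t s : ℝ) : EReal :=
  ⨅ (r : ℚ) (_ : s < (r : ℝ)), FF γ a c t (r : ℝ)

omit hγ in
lemma FF_le {t s b : ℝ} (h : PP γ a c t s b) : FF γ a c t s ≤ (b : EReal) := by
  apply le_of_forall_gt_imp_ge_of_dense
  intro e he
  obtain ⟨r, hr1, hr2⟩ := EReal.exists_rat_btwn_of_lt he
  have hbr : b ≤ (r : ℝ) := by exact_mod_cast hr1.le
  have : PP γ a c t s (r : ℝ) := PP_mono le_rfl hbr h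
  exact le_trans (iInf₂_le r this) hr2.le

omit hγ in
lemma le_GG {t s b : ℝ} (h : ∀ s' b' : ℝ, s < s' → b' < b → ¬ PP γ a c t s' b') :
    (b : EReal) ≤ GG γ a c t s := by
  refine le_iInf₂ fun r hr => le_iInf₂ fun b' hb' => ?_
  rw [EReal.coe_le_coe_iff]
  by_contra hlt
  exact h r b' hr (not_le.mp hlt) hb'

omit hγ in
lemma FF_mono (t : ℝ) : Monotone (FF γ a c t) := by
  intro s s' hss'
  refine le_iInf₂ fun b hb => ?_
  have hb' : PP γ a c t s (b : ℝ) := PP_mono hss' le_rfl hb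
  exact iInf₂_le b hb'

lemma measurable_FF : Measurable (fun w : ℝ × ℝ => FF γ a c w.1 w.2) := by
  classical
  have : (fun w : ℝ × ℝ => FF γ a c w.1 w.2) = fun w =>
      ⨅ (b : ℚ), ({w : ℝ × ℝ | PP γ a c w.1 w.2 (b : ℝ)}.piecewise
        (fun _ => ((b : ℝ) : EReal)) (fun _ => (⊤ : EReal)) w) := by
    classical
    funext w
    rw [FF, iInf_congr]
    intro b
    by_cases h : PP γ a c w.1 w.2 (b : ℝ)
    · rw [iInf_pos h]; simp [Set.piecewise, h]
    · rw [iInf_neg h]; simp [Set.piecewise, h]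
  rw [this]
  refine Measurable.iInf fun b => Measurable.piecewise ?_ measurable_const measurable_const
  have hclosed : IsClosed {w : ℝ × ℝ | PP γ a c w.1 w.2 (b : ℝ)} := by
    have : {w : ℝ × ℝ | PP γ a c w.1 w.2 (b : ℝ)} =
        (fun w : ℝ × ℝ => (w.1, w.2, (b : ℝ))) ⁻¹' {w : ℝ × ℝ × ℝ | PP γ a c w.1 w.2.1 w.2.2} := by
      rfl
    rw [this]
    exact (PP_isClosed hγ).preimage (by fun_prop)
  exact hclosed.measurableSet

lemma measurable_GG : Measurable (fun w : ℝ × ℝ => GG γ a c w.1 w.2) := by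
  classical
  have : (fun w : ℝ × ℝ => GG γ a c w.1 w.2) = fun w =>
      ⨅ (r : ℚ), ({w : ℝ × ℝ | w.2 < (r : ℝ)}.piecewise
        (fun w => FF γ a c w.1 (r : ℝ)) (fun _ => (⊤ : EReal)) w) := by
    classical
    funext w
    rw [GG, iInf_congr]
    intro r
    by_cases h : w.2 < (r : ℝ)
    · rw [iInf_pos h]; simp [Set.piecewise, h]
    · rw [iInf_neg h]; simp [Set.piecewise, h]
  rw [this]
  refine Measurable.iInf fun r => Measurable.piecewise ?_ ?_ measurable_const
  · exact measurableSet_lt measurable_snd measurable_const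
  · have hm := measurable_FF (a := a) (c := c) hγ
    have : (fun w : ℝ × ℝ => FF γ a c w.1 (r : ℝ)) =
        (fun v : ℝ × ℝ => FF γ a c v.1 v.2) ∘ (fun w : ℝ × ℝ => (w.1, (r : ℝ))) := rfl
    rw [this]
    exact hm.comp (measurable_fst.prodMk measurable_const)

omit hγ in
lemma countable_jumps (t : ℝ) : Set.Countable {s : ℝ | FF γ a c t s < GG γ a c t s} := by
  have hsub : {s : ℝ | FF γ a c t s < GG γ a c t s} ⊆
      ⋃ q : ℚ, {s : ℝ | FF γ a c t s < ((q : ℝ) : EReal) ∧ ((q : ℝ) : EReal) < GG γ a c t s} := by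
    intro s hs
    obtain ⟨q, hq1, hq2⟩ := EReal.exists_rat_btwn_of_lt hs
    exact mem_iUnion.mpr ⟨q, hq1, hq2⟩
  refine Set.Countable.mono hsub (Set.countable_iUnion fun q => ?_)
  apply Set.Subsingleton.countable
  intro s1 hs1 s2 hs2
  by_contra hne
  rcases lt_or_gt_of_ne hne with hlt | hlt
  all_goals {
    first
    | (obtain ⟨r, hr1, hr2⟩ := exists_rat_btwn hlt
       have key : GG γ a c t s1 ≤ FF γ a c t s2 :=
         le_trans (iInf₂_le r hr1) (FF_mono t hr2.le)
       exact absurd (lt_trans (lt_of_le_of_lt key hs2.1) hs1.2) (lt_irrefl _))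
    | (obtain ⟨r, hr1, hr2⟩ := exists_rat_btwn hlt
       have key : GG γ a c t s2 ≤ FF γ a c t s1 :=
         le_trans (iInf₂_le r hr1) (FF_mono t hr2.le)
       exact absurd (lt_trans (lt_of_le_of_lt key hs1.1) hs2.2) (lt_irrefl _))
  }

/-- The parametrized "critical band" set over `((t,μ), s)`. -/
def M3 (γ : X → ℂ) (a c : X) : Set ((ℝ × ℝ) × ℝ) :=
  {p | FF γ a c p.1.1 p.2 ≤ ((p.2 + p.1.2 : ℝ) : EReal) ∧
       ((p.2 + p.1.2 : ℝ) : EReal) ≤ GG γ a c p.1.1 p.2}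

lemma meas_M3 : MeasurableSet (M3 γ a c) := by
  have h1 : Measurable fun p : (ℝ × ℝ) × ℝ => FF γ a c p.1.1 p.2 := by
    have : (fun p : (ℝ × ℝ) × ℝ => FF γ a c p.1.1 p.2) =
        (fun v : ℝ × ℝ => FF γ a c v.1 v.2) ∘ (fun p : (ℝ × ℝ) × ℝ => (p.1.1, p.2)) := rfl
    rw [this]
    exact (measurable_FF (a := a) (c := c) hγ).comp
      ((measurable_fst.comp measurable_fst).prodMk measurable_snd)
  have h2 : Measurable fun p : (ℝ × ℝ) × ℝ => ((p.2 + p.1.2 : ℝ) : EReal) :=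
    measurable_coe_real_ereal.comp (measurable_snd.add (measurable_snd.comp measurable_fst))
  have h3 : Measurable fun p : (ℝ × ℝ) × ℝ => GG γ a c p.1.1 p.2 := by
    have : (fun p : (ℝ × ℝ) × ℝ => GG γ a c p.1.1 p.2) =
        (fun v : ℝ × ℝ => GG γ a c v.1 v.2) ∘ (fun p : (ℝ × ℝ) × ℝ => (p.1.1, p.2)) := rfl
    rw [this]
    exact (measurable_GG (a := a) (c := c) hγ).comp
      ((measurable_fst.comp measurable_fst).prodMk measurable_snd)
  exact (measurableSet_le (α := EReal) h1 h2).inter (measurableSet_le (α := EReal) h2 h3)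

/-- For fixed `t`, almost every `μ` has a null critical `s`-section. -/
lemma slice_null (t : ℝ) :
    ∀ᵐ m : ℝ, volume {s : ℝ | FF γ a c t s ≤ ((s + m : ℝ) : EReal) ∧
      ((s + m : ℝ) : EReal) ≤ GG γ a c t s} = 0 := by
  set M : Set (ℝ × ℝ) := {p | FF γ a c t p.2 ≤ ((p.2 + p.1 : ℝ) : EReal) ∧
      ((p.2 + p.1 : ℝ) : EReal) ≤ GG γ a c t p.2} with hM
  have hMmeas : MeasurableSet M := by
    have : M = (fun p : ℝ × ℝ => ((t, p.1), p.2)) ⁻¹' M3 γ a c := rfl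
    rw [this]
    exact (meas_M3 (a := a) (c := c) hγ).preimage (by fun_prop)
  have hswapmeas : MeasurableSet (Prod.swap ⁻¹' M) := hMmeas.preimage measurable_swap
  have hM0 : (volume.prod volume) M = 0 := by
    have h1 : (volume.prod volume) (Prod.swap ⁻¹' M) = (volume.prod volume) M :=
      (Measure.measurePreserving_swap).measure_preimage hMmeas.nullMeasurableSet
    rw [← h1, Measure.prod_apply hswapmeas]
    have hae : ∀ᵐ s : ℝ, volume (Prod.mk s ⁻¹' (Prod.swap ⁻¹' M)) = 0 := by
      have hcnt := countable_jumps (γ := γ) (a := a) (c := c) t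
      filter_upwards [measure_eq_zero_iff_ae_notMem.mp (hcnt.measure_zero volume)] with s hs
      have hGF : GG γ a c t s ≤ FF γ a c t s := not_lt.mp hs
      have hsub2 : Prod.mk s ⁻¹' (Prod.swap ⁻¹' M) ⊆
          {m : ℝ | ((s + m : ℝ) : EReal) = FF γ a c t s} := by
        rintro m ⟨h1', h2'⟩
        exact le_antisymm (h2'.trans hGF) h1'
      refine measure_mono_null hsub2 (Set.Subsingleton.measure_zero ?_ volume)
      intro m1 h1' m2 h2'
      have heq : ((s + m1 : ℝ) : EReal) = ((s + m2 : ℝ) : EReal) :=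
        h1'.trans h2'.symm
      have := EReal.coe_injective heq
      linarith
    rw [lintegral_congr_ae (by filter_upwards [hae] with s h using h)]
    simp
  have := (Measure.measure_prod_null hMmeas).mp hM0
  filter_upwards [this] with m hm
  exact hm

/-- The 3D null superset for a fixed pair of points and `j`. -/
def Nset (γ : X → ℂ) (a c : X) (j : ℤ) : Set (ℝ × ℝ × ℝ) :=
  {P | P.2.2 ∈ Ioc (0:ℝ) 1 ∧
    FF γ a c P.2.1 (P.2.2 * ((j : ℝ) + P.1)) ≤
      ((P.2.2 * ((j : ℝ) + P.1) + P.2.2 : ℝ) : EReal) ∧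
    ((P.2.2 * ((j : ℝ) + P.1) + P.2.2 : ℝ) : EReal) ≤
      GG γ a c P.2.1 (P.2.2 * ((j : ℝ) + P.1))}

lemma Nset_null (j : ℤ) : volume (Nset γ a c j) = 0 := by
  have hNmeas : MeasurableSet (Nset γ a c j) := by
    have hrepr : Nset γ a c j =
        ((fun P : ℝ × ℝ × ℝ => P.2.2) ⁻¹' Ioc (0:ℝ) 1) ∩
        ((fun P : ℝ × ℝ × ℝ => ((P.2.1, P.2.2), P.2.2 * ((j : ℝ) + P.1))) ⁻¹' M3 γ a c) := by
      ext P
      simp only [Nset, M3, mem_inter_iff, mem_preimage, mem_setOf_eq]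
    rw [hrepr]
    refine MeasurableSet.inter (measurableSet_Ioc.preimage (by fun_prop)) ?_
    exact (meas_M3 (a := a) (c := c) hγ).preimage (by fun_prop)
  -- pass to the swapped set
  rw [Measure.volume_eq_prod]
  have hswapmeas : MeasurableSet (Prod.swap ⁻¹' (Nset γ a c j)) :=
    hNmeas.preimage measurable_swap
  have h1 : ((volume : Measure (ℝ × ℝ)).prod (volume : Measure ℝ))
      (Prod.swap ⁻¹' (Nset γ a c j)) =
      ((volume : Measure ℝ).prod (volume : Measure (ℝ × ℝ))) (Nset γ a c j) :=
    (Measure.measurePreserving_swap).measure_preimage hNmeas.nullMeasurableSet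
  rw [← h1, Measure.prod_apply hswapmeas]
  -- the a.e. section claim
  have hae : ∀ᵐ w : ℝ × ℝ, volume (Prod.mk w ⁻¹' (Prod.swap ⁻¹' (Nset γ a c j))) = 0 := by
    -- the set of bad (t, μ)
    set Z : Set (ℝ × ℝ) := {w | volume (Prod.mk w ⁻¹' (M3 γ a c)) ≠ 0} with hZ
    have hZmeas : MeasurableSet Z := by
      have hm : Measurable fun w : ℝ × ℝ => volume (Prod.mk w ⁻¹' (M3 γ a c)) :=
        measurable_measure_prodMk_left (meas_M3 (a := a) (c := c) hγ)
      exact (hm (MeasurableSet.singleton 0)).compl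
    have hZ0 : (volume.prod volume) Z = 0 := by
      rw [Measure.measure_prod_null hZmeas]
      refine Filter.Eventually.of_forall fun t => ?_
      have hae1 : ∀ᵐ m : ℝ, (t, m) ∉ Z := by
        filter_upwards [slice_null (a := a) (c := c) hγ t] with m hm
        simp only [hZ, mem_setOf_eq, not_not]
        exact hm
      exact measure_eq_zero_iff_ae_notMem.mpr hae1
    rw [← Measure.volume_eq_prod] at hZ0
    have hZae : ∀ᵐ w : ℝ × ℝ, w ∉ Z := measure_eq_zero_iff_ae_notMem.mp hZ0
    filter_upwards [hZae] with w hw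
    set t := w.1 with ht
    set m := w.2 with hm
    by_cases hmIoc : m ∈ Ioc (0:ℝ) 1
    · have hE0 : volume (Prod.mk w ⁻¹' (M3 γ a c)) = 0 := not_not.mp hw
      have hsub : Prod.mk w ⁻¹' (Prod.swap ⁻¹' (Nset γ a c j)) ⊆
          (fun x : ℝ => m * (j : ℝ) + m * x) ⁻¹' (Prod.mk w ⁻¹' (M3 γ a c)) := by
        intro x hx
        obtain ⟨-, hx2, hx3⟩ := hx
        simp only [Prod.swap_prod_mk] at hx2 hx3
        have harith : w.2 * ((j : ℝ) + x) = w.2 * (j : ℝ) + w.2 * x := by ring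
        rw [harith] at hx2 hx3
        exact ⟨hx2, hx3⟩
      refine measure_mono_null hsub ?_
      have hcomp : (fun x : ℝ => m * (j : ℝ) + m * x) =
          (fun y : ℝ => m * (j : ℝ) + y) ∘ (fun x : ℝ => m * x) := rfl
      rw [hcomp, preimage_comp]
      have h4 : volume ((fun y : ℝ => m * (j : ℝ) + y) ⁻¹' (Prod.mk w ⁻¹' (M3 γ a c))) = 0 := by
        rw [measure_preimage_add]
        exact hE0
      rw [Real.volume_preimage_mul_left (ne_of_gt hmIoc.1), h4, mul_zero]
    · have : Prod.mk w ⁻¹' (Prod.swap ⁻¹' (Nset γ a c j)) = ∅ := by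
        ext x
        simp only [mem_preimage, mem_empty_iff_false, iff_false]
        rintro ⟨hx1, -, -⟩
        exact hmIoc hx1
      rw [this]
      exact measure_empty
  rw [lintegral_congr_ae (by filter_upwards [hae] with w h using h)]
  simp

end Topology

end Claim341

open Claim341

/-- **Claim 3.4.1.** Let `γ : X → ℂ` be a generalized path and `{q_k}` a countable dense
subset of `X`.  For `k ≠ l` and `j ∈ ℤ`, let `B_{kl}^j` be the set of parameters
`(x,t,μ) ∈ [0,1] × [0,1] × (0,1]` such that there exists a subcontinuum
`C ⊆ γ⁻¹(S^{x,t,μ}_j)` containing `q_k` and `q_l`, and every such subcontinuum `C`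
satisfies `γ(C) ∩ ∂S^{x,t,μ}_j ≠ ∅`.  Then `B = ⋃_{k≠l, j} B_{kl}^j` has Lebesgue
measure zero. -/
theorem bad_set_measure_zero
    {X : Type*} [MetricSpace X] [CompactSpace X] [ConnectedSpace X] [LocallyConnectedSpace X]
    (γ : X → ℂ) (hγ : Continuous γ)
    (q : ℕ → X) (hq : DenseRange q) :
    volume {P : ℝ × ℝ × ℝ |
      P.1 ∈ Icc (0:ℝ) 1 ∧ P.2.1 ∈ Icc (0:ℝ) 1 ∧ P.2.2 ∈ Ioc (0:ℝ) 1 ∧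
      ∃ (k l : ℕ) (j : ℤ), k ≠ l ∧
        (∃ C : Set X, IsCompact C ∧ IsConnected C ∧ C ⊆ γ ⁻¹' Strip P.1 P.2.1 P.2.2 j ∧
          q k ∈ C ∧ q l ∈ C) ∧
        (∀ C : Set X, IsCompact C → IsConnected C → C ⊆ γ ⁻¹' Strip P.1 P.2.1 P.2.2 j →
          q k ∈ C → q l ∈ C →
          (γ '' C ∩ frontier (Strip P.1 P.2.1 P.2.2 j)).Nonempty)} = 0 := by
  classical
  have hsub : {P : ℝ × ℝ × ℝ |
      P.1 ∈ Icc (0:ℝ) 1 ∧ P.2.1 ∈ Icc (0:ℝ) 1 ∧ P.2.2 ∈ Ioc (0:ℝ) 1 ∧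
      ∃ (k l : ℕ) (j : ℤ), k ≠ l ∧
        (∃ C : Set X, IsCompact C ∧ IsConnected C ∧ C ⊆ γ ⁻¹' Strip P.1 P.2.1 P.2.2 j ∧
          q k ∈ C ∧ q l ∈ C) ∧
        (∀ C : Set X, IsCompact C → IsConnected C → C ⊆ γ ⁻¹' Strip P.1 P.2.1 P.2.2 j →
          q k ∈ C → q l ∈ C →
          (γ '' C ∩ frontier (Strip P.1 P.2.1 P.2.2 j)).Nonempty)} ⊆
      ⋃ (k : ℕ) (l : ℕ) (j : ℤ), Nset γ (q k) (q l) j := by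
    rintro P ⟨-, -, hμ, k, l, j, -, ⟨C, hCcomp, hCconn, hCsub, hkC, hlC⟩, hall⟩
    refine mem_iUnion.mpr ⟨k, mem_iUnion.mpr ⟨l, mem_iUnion.mpr ⟨j, ?_⟩⟩⟩
    have hμ0 : 0 < P.2.2 := hμ.1
    -- abbreviations (as plain terms)
    have hKeq : ∀ p : X, γ p ∈ Strip P.1 P.2.1 P.2.2 j ↔
        uu P.2.1 (γ p) ∈ Icc (P.2.2 * ((j : ℝ) + P.1)) (P.2.2 * ((j : ℝ) + P.1) + P.2.2) :=
      fun p => mem_Strip_iff hμ0 j (γ p)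
    have hPP : PP γ (q k) (q l) P.2.1 (P.2.2 * ((j : ℝ) + P.1))
        (P.2.2 * ((j : ℝ) + P.1) + P.2.2) := by
      refine (PP_iff_exists hγ _ _ _).mpr ⟨C, hCcomp, hCconn, ?_, hkC, hlC⟩
      intro p hp
      exact (hKeq p).mp (hCsub hp)
    refine ⟨hμ, FF_le hPP, le_GG ?_⟩
    intro s' b' hs' hb' hP'
    obtain ⟨C', hC'comp, hC'conn, hC'sub, hkC', hlC'⟩ := (PP_iff_exists hγ _ _ _).mp hP'
    have hC'Ioo : ∀ p ∈ C', uu P.2.1 (γ p) ∈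
        Ioo (P.2.2 * ((j : ℝ) + P.1)) (P.2.2 * ((j : ℝ) + P.1) + P.2.2) := by
      intro p hp
      obtain ⟨h1, h2⟩ := hC'sub hp
      exact ⟨lt_of_lt_of_le hs' h1, lt_of_le_of_lt h2 hb'⟩
    have hC'strip : C' ⊆ γ ⁻¹' Strip P.1 P.2.1 P.2.2 j := by
      intro p hp
      exact (hKeq p).mpr ⟨(hC'Ioo p hp).1.le, (hC'Ioo p hp).2.le⟩
    obtain ⟨z, hz1, hz2⟩ := hall C' hC'comp hC'conn hC'strip hkC' hlC'
    obtain ⟨p, hpC', rfl⟩ := hz1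
    have huucont : Continuous fun z : ℂ => uu P.2.1 z :=
      continuous_uu.comp (continuous_const.prodMk continuous_id)
    have hopen : IsOpen ((fun z : ℂ => uu P.2.1 z) ⁻¹'
        Ioo (P.2.2 * ((j : ℝ) + P.1)) (P.2.2 * ((j : ℝ) + P.1) + P.2.2)) :=
      isOpen_Ioo.preimage huucont
    have hsubStrip : ((fun z : ℂ => uu P.2.1 z) ⁻¹'
        Ioo (P.2.2 * ((j : ℝ) + P.1)) (P.2.2 * ((j : ℝ) + P.1) + P.2.2)) ⊆
        Strip P.1 P.2.1 P.2.2 j := by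
      intro z hz
      exact (mem_Strip_iff hμ0 j z).mpr ⟨hz.1.le, hz.2.le⟩
    have hint : γ p ∈ interior (Strip P.1 P.2.1 P.2.2 j) :=
      interior_maximal hsubStrip hopen (hC'Ioo p hpC')
    exact disjoint_interior_frontier.ne_of_mem hint hz2 rfl
  refine measure_mono_null hsub ?_
  refine measure_iUnion_null fun k => measure_iUnion_null fun l => measure_iUnion_null fun j =>
    Nset_null (a := q k) (c := q l) hγ j
end
end
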